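/- arXiv:2006.15730 — 7 statements merged into one kernel-verified Lean document; each statement's English description precedes it below -/
import Mathlib

section
/- If G is a bipartite graph with parts X and Y satisfying that for every subset A of X with |A| ≥ 3, the set N̂(A) = {y ∈ Y : |N(y) ∩ A| ≥ 2} has size at least |A| and the induced subgraph G[A ∪ N̂(A)] is 2-connected, then any two distinct vertices x, x' ∈ X with |X| ≥ 3 have at least one common neighbor. -/
open SimpleGraph Set

/-- `(X, Y)` is a bipartition of the graph `G`. -/
def IsBipartition {V : Type*} (G : SimpleGraph V) (X Y : Set V) : Prop :=
  X ∪ Y = Set.univ ∧ Disjoint X Y ∧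
    ∀ ⦃u v⦄, G.Adj u v → (u ∈ X ∧ v ∈ Y) ∨ (u ∈ Y ∧ v ∈ X)

/-- The super-neighborhood `N̂(A)`: vertices of `Y` with at least two neighbors in `A`. -/
def superNbhd {V : Type*} (G : SimpleGraph V) (Y A : Set V) : Set V :=
  {y ∈ Y | 2 ≤ (A ∩ G.neighborSet y).ncard}

/-- The subgraph of `G` induced on the vertex set `S` is 2-connected. -/
def TwoConnectedOn {V : Type*} (G : SimpleGraph V) (S : Set V) : Prop :=
  3 ≤ S.ncard ∧ ∀ v ∈ S, (G.induce (S \ {v})).Connected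

/-- Condition (*) for the `(X,Y)`-bigraph `G`. -/
def StarCond {V : Type*} (G : SimpleGraph V) (X Y : Set V) : Prop :=
  ∀ A ⊆ X, 3 ≤ A.ncard →
    A.ncard ≤ (superNbhd G Y A).ncard ∧ TwoConnectedOn G (A ∪ superNbhd G Y A)

/-- `G` has a cycle with all vertices inside `S` whose set of vertices in `X` is exactly `A`. -/
def CycleOnWithin {V : Type*} (G : SimpleGraph V) (X A S : Set V) : Prop :=
  ∃ (v : V) (c : G.Walk v v), c.IsCycle ∧ {u | u ∈ c.support} ⊆ S ∧
    {u | u ∈ c.support} ∩ X = A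

/-- The subgraph of `G` induced on `S` is super-cyclic with respect to the part `X`. -/
def SuperCyclicWithin {V : Type*} (G : SimpleGraph V) (X S : Set V) : Prop :=
  ∀ A ⊆ X, 3 ≤ A.ncard → CycleOnWithin G X A S

/-- `G` is super-cyclic with respect to the part `X`. -/
def SuperCyclic {V : Type*} (G : SimpleGraph V) (X : Set V) : Prop :=
  SuperCyclicWithin G X Set.univ

/-- The `(X,Y)`-bigraph `G` is critical. -/
def Critical {V : Type*} (G : SimpleGraph V) (X Y : Set V) : Prop :=
  StarCond G X Y ∧ ¬ SuperCyclic G X ∧ superNbhd G Y X = Y ∧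
    ∀ X' ⊂ X, SuperCyclicWithin G X' (X' ∪ Y)

/-- The critical `(X,Y)`-bigraph `G` is saturated: adding any `X,Y`-edge makes it super-cyclic. -/
def Saturated {V : Type*} (G : SimpleGraph V) (X Y : Set V) : Prop :=
  ∀ x ∈ X, ∀ y ∈ Y, ¬ G.Adj x y →
    SuperCyclic (G ⊔ SimpleGraph.fromEdgeSet {s(x, y)}) X

/-- `G` is `Y`-minimal: every proper subgraph `(X', Y'; E')` satisfying (*) is super-cyclic. -/
def YMinimal {V : Type*} (G : SimpleGraph V) (X Y : Set V) : Prop :=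
  ∀ (H : SimpleGraph V) (X' Y' : Set V), H ≤ G → X' ⊆ X → Y' ⊆ Y →
    (∀ ⦃u v⦄, H.Adj u v → (u ∈ X' ∧ v ∈ Y') ∨ (u ∈ Y' ∧ v ∈ X')) →
    ¬ (H = G ∧ X' = X ∧ Y' = Y) →
    StarCond H X' Y' → SuperCyclic H X'

theorem stmt_0 {V : Type*} [Fintype V] (G : SimpleGraph V) (X Y : Set V)
    (hbip : IsBipartition G X Y) (hX : 3 ≤ X.ncard) (hstar : StarCond G X Y) :
    ∀ x ∈ X, ∀ x' ∈ X, x ≠ x' → (G.neighborSet x ∩ G.neighborSet x').Nonempty := by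

  classical
  intro x hx x' hx' hne
  obtain ⟨hcov, hdisj, hadj⟩ := hbip
  have hns : ¬ X ⊆ ({x, x'} : Set V) := by
    intro h
    have h2 : X.ncard ≤ ({x, x'} : Set V).ncard := Set.ncard_le_ncard h (Set.toFinite _)
    have h1 : ({x, x'} : Set V).ncard ≤ 2 := by
      refine le_trans (Set.ncard_insert_le _ _) ?_
      simp [Set.ncard_singleton]
    omega
  obtain ⟨x'', hx''X, hx''⟩ := Set.not_subset.mp hns
  have hxx'' : x ≠ x'' := by rintro rfl; exact hx'' (by simp)
  have hx'x'' : x' ≠ x'' := by rintro rfl; exact hx'' (by simp)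
  set A : Set V := {x, x', x''} with hA
  have hAX : A ⊆ X := by
    intro a ha
    rcases ha with rfl | rfl | rfl <;> assumption
  have hA3 : A.ncard = 3 := Set.ncard_eq_three.mpr ⟨x, x', x'', hne, hxx'', hx'x'', rfl⟩
  obtain ⟨-, -, hconn⟩ := hstar A hAX (by omega)
  set S : Set V := (A ∪ superNbhd G Y A) \ {x''} with hS
  have hconn' : (G.induce S).Connected := hconn x'' (Or.inl (by simp [hA]))
  have hxS : x ∈ S := ⟨Or.inl (by simp [hA]), by simp [hxx'']⟩
  have hx'S : x' ∈ S := ⟨Or.inl (by simp [hA]), by simp [hx'x'']⟩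
  have hYnotX : ∀ u, u ∈ Y → u ∉ X := fun u hu hux => Set.disjoint_left.mp hdisj hux hu
  have hSX : ∀ u ∈ S, u ∈ X → u = x ∨ u = x' := by
    intro u hu huX
    rcases hu.1 with h | h
    · rcases h with rfl | rfl | rfl
      · exact Or.inl rfl
      · exact Or.inr rfl
      · exact (hu.2 rfl).elim
    · exact absurd huX (hYnotX u h.1)
  have main : ∀ n (p : (G.induce S).Walk ⟨x, hxS⟩ ⟨x', hx'S⟩), p.length ≤ n →
      (G.neighborSet x ∩ G.neighborSet x').Nonempty := by
    intro n
    induction n with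
    | zero =>
      intro p hp
      have h0 : p.length = 0 := Nat.le_zero.mp hp
      have := p.eq_of_length_eq_zero h0
      exact absurd (congrArg Subtype.val this) hne
    | succ n ih =>
      intro p hp
      cases p with
      | nil => exact absurd rfl hne
      | cons h q =>
        rename_i b
        have hG1 : G.Adj x b.val := h
        have hbY : (b : V) ∈ Y := by
          rcases hadj hG1 with ⟨-, h2⟩ | ⟨h1, -⟩
          · exact h2
          · exact absurd hx (hYnotX x h1)
        cases q with
        | nil =>
          exact absurd hx' (hYnotX x' (by simpa using hbY))
        | cons h2 q2 =>
          rename_i c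
          have hG2 : G.Adj b.val c.val := h2
          have hcX : (c : V) ∈ X := by
            rcases hadj hG2 with ⟨h1, -⟩ | ⟨-, h3⟩
            · exact absurd h1 (hYnotX _ hbY)
            · exact h3
          rcases hSX c.val c.2 hcX with hcx | hcx'
          · have hceq : c = ⟨x, hxS⟩ := Subtype.ext hcx
            have hlen : q2.length ≤ n := by
              have := hp
              simp only [SimpleGraph.Walk.length_cons] at this
              omega
            exact ih (q2.copy hceq rfl) (by simpa using hlen)
          · refine ⟨b.val, ?_, ?_⟩
            · exact hG1
            · exact (hcx' ▸ hG2).symm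
  obtain ⟨p⟩ := hconn'.preconnected ⟨x, hxS⟩ ⟨x', hx'S⟩
  exact main p.length p le_rfl
end

section
/- Let G be a bipartite graph with parts X and Y, let x_0 ∈ X, and let C = x_1 y_1 x_2 y_2 … x_k y_k x_1 be a cycle in G − x_0 with base vertex set X − {x_0} (indices mod k). Suppose G has no cycle whose intersection with X is all of X. If y_i and y_j are both neighbors of x_0 (with i ≠ j), then x_i and x_j have no common neighbor outside V(C). -/
open SimpleGraph Set

namespace CycAux
variable {V : Type*} {G : SimpleGraph V}

def walkAux (g : ℕ → V) (h : ∀ m, G.Adj (g m) (g (m+1))) : (m : ℕ) → G.Walk (g 0) (g m)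
  | 0 => SimpleGraph.Walk.nil
  | m+1 => (walkAux g h m).concat (h m)

lemma walkAux_support (g : ℕ → V) (h : ∀ m, G.Adj (g m) (g (m+1))) (m : ℕ) :
    (walkAux g h m).support = (List.range (m+1)).map g := by
  induction m with
  | zero => simp [walkAux, List.range_succ]
  | succ m ih =>
      rw [walkAux, SimpleGraph.Walk.support_concat, ih, List.range_succ (n := m+1)]
      simp

lemma walkAux_edges (g : ℕ → V) (h : ∀ m, G.Adj (g m) (g (m+1))) (m : ℕ) :
    (walkAux g h m).edges = (List.range m).map (fun a => s(g a, g (a+1))) := by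
  induction m with
  | zero => simp [walkAux]
  | succ m ih =>
      rw [walkAux, SimpleGraph.Walk.edges_concat, ih, List.range_succ (n := m)]
      simp

lemma exists_cycle_of_seq (G : SimpleGraph V) (n : ℕ) (hn : 3 ≤ n) (f : ℕ → V)
    (hinj : ∀ a, a < n → ∀ b, b < n → f a = f b → a = b)
    (hadj : ∀ m, m < n → G.Adj (f m) (f (m+1)))
    (hcl : f n = f 0) :
    ∃ (v : V) (c : G.Walk v v), c.IsCycle ∧ ∀ m, m < n → f m ∈ c.support := by
  have hnpos : 0 < n := by omega
  set g : ℕ → V := fun m => f (m % n) with hg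
  have hglt : ∀ m, m % n < n := fun m => Nat.mod_lt _ hnpos
  have hgeq : ∀ m, m < n → g m = f m := fun m hm => by simp [hg, Nat.mod_eq_of_lt hm]
  have hgwrap : ∀ c : ℕ, c + 1 = n → g (c+1) = f 0 := by
    intro c hc; simp [hg, hc, Nat.mod_self]
  have hgadj : ∀ m, G.Adj (g m) (g (m+1)) := by
    intro m
    have h1 : m % n < n := hglt m
    have h2 : (m+1) % n = (m % n + 1) % n := by rw [Nat.add_mod, Nat.mod_eq_of_lt (show 1 < n by omega)]
    by_cases he : m % n + 1 = n
    · have h3 : (m+1) % n = 0 := by rw [h2, he, Nat.mod_self]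
      have h4 := hadj (m % n) h1
      rw [he, hcl] at h4
      show G.Adj (f (m % n)) (f ((m+1) % n))
      rwa [h3]
    · have h3 : (m+1) % n = m % n + 1 := by rw [h2, Nat.mod_eq_of_lt (by omega)]
      show G.Adj (f (m % n)) (f ((m+1) % n))
      rw [h3]; exact hadj (m % n) h1
  have hgn : g n = g 0 := by simp [hg, Nat.mod_self]
  have geq : ∀ c d : ℕ, c < n → d < n → g c = g d → c = d := by
    intro c d hc hd h
    exact hinj c hc d hd (by rwa [hgeq c hc, hgeq d hd] at h)
  have gsuc : ∀ c d : ℕ, c + 1 < n → d + 1 ≤ n → g (c+1) = g (d+1) → c = d := by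
    intro c d hc hd h
    rcases eq_or_lt_of_le hd with he | hl
    · rw [hgwrap d he] at h
      have := hinj (c+1) hc 0 (by omega) (by rwa [hgeq _ hc] at h)
      omega
    · exact Nat.succ_injective (geq _ _ hc hl h)
  refine ⟨g 0, (walkAux g hgadj n).copy rfl hgn, ?_, ?_⟩
  · rw [SimpleGraph.Walk.isCycle_def]
    refine ⟨?_, ?_, ?_⟩
    · rw [SimpleGraph.Walk.isTrail_def, SimpleGraph.Walk.edges_copy, walkAux_edges]
      refine List.nodup_range.map_on ?_
      intro a ha b hb hab
      rw [List.mem_range] at ha hb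
      rw [Sym2.eq_iff] at hab
      rcases hab with ⟨h1, h2⟩ | ⟨h1, h2⟩
      · exact geq a b ha hb h1
      · -- g a = g (b+1), g (a+1) = g b
        by_cases he : b + 1 = n
        · have ha0 : a = 0 := by
            apply hinj a ha 0 (by omega)
            rw [← hgeq a ha, h1, hgwrap b he]
          have h1n : (1:ℕ) < n := by omega
          have hb1 : (1:ℕ) = b := by
            apply hinj 1 h1n b hb
            rw [← hgeq 1 h1n, ← hgeq b hb, ← h2, ha0]
          omega
        · have : a = b + 1 := by
            apply hinj a ha (b+1) (by omega)
            rw [← hgeq a ha, ← hgeq (b+1) (by omega), h1]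
          -- then g (a+1) = g (b+2) = g b
          subst this
          by_cases he2 : b + 2 = n
          · have : b = 0 := by
              apply hinj b hb 0 (by omega)
              rw [← hgeq b hb, ← h2]
              exact hgwrap (b+1) he2
            omega
          · have : b + 2 = b := by
              apply hinj (b+2) (by omega) b hb
              rw [← hgeq (b+2) (by omega), ← hgeq b hb]
              exact h2
            omega
    · intro hnil
      have h5 : ((walkAux g hgadj n).copy rfl hgn).edges = [] := by rw [hnil]; rfl
      rw [SimpleGraph.Walk.edges_copy, walkAux_edges] at h5
      have := congrArg List.length h5
      simp at this
      omega
    · rw [SimpleGraph.Walk.support_copy, walkAux_support, List.range_succ_eq_map]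
      simp only [List.map_cons, List.tail_cons, List.map_map]
      refine List.nodup_range.map_on ?_
      intro a ha b hb hab
      rw [List.mem_range] at ha hb
      simp only [Function.comp] at hab
      rcases eq_or_lt_of_le (Nat.succ_le_of_lt ha) with hea | hla
      · rcases eq_or_lt_of_le (Nat.succ_le_of_lt hb) with heb | hlb
        · omega
        · exfalso
          have h6 : b + 1 = 0 := by
            apply hinj (b+1) hlb 0 (by omega)
            rw [← hgeq (b+1) hlb, ← hab, hgwrap a (by omega)]
          omega
      · rcases eq_or_lt_of_le (Nat.succ_le_of_lt hb) with heb | hlb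
        · exfalso
          have h6 : a + 1 = 0 := by
            apply hinj (a+1) hla 0 (by omega)
            rw [← hgeq (a+1) hla, hab, hgwrap b (by omega)]
          omega
        · have := hinj (a+1) hla (b+1) hlb (by rw [← hgeq (a+1) hla, ← hgeq (b+1) hlb]; exact hab)
          omega
  · intro m hm
    rw [SimpleGraph.Walk.support_copy, walkAux_support]
    rw [← hgeq m hm]
    exact List.mem_map_of_mem (List.mem_range.mpr (by omega))

end CycAux

theorem stmt_1 {V : Type*} [Fintype V] (G : SimpleGraph V) (X Y : Set V)
    (hbip : IsBipartition G X Y) (x₀ : V) (hx₀ : x₀ ∈ X)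
    (k : ℕ) (hk : 2 ≤ k) (x y : ZMod k → V)
    (hxinj : Function.Injective x) (hyinj : Function.Injective y)
    (hxX : ∀ i, x i ∈ X) (hyY : ∀ i, y i ∈ Y)
    (hadj1 : ∀ i, G.Adj (x i) (y i)) (hadj2 : ∀ i, G.Adj (y i) (x (i + 1)))
    (hbase : Set.range x = X \ {x₀})
    (hno : ¬ CycleOnWithin G X X Set.univ) :
    ∀ i j : ZMod k, i ≠ j → G.Adj x₀ (y i) → G.Adj x₀ (y j) →
      ∀ w, w ∉ Set.range x ∪ Set.range y → ¬ (G.Adj (x i) w ∧ G.Adj (x j) w) := by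
  intro i j hij hyi hyj w hw hww
  obtain ⟨hwi, hwj⟩ := hww
  haveI : NeZero k := ⟨by omega⟩
  obtain ⟨hXY, hdisj, hbipadj⟩ := hbip
  -- basic distinctness facts
  have hwY : w ∈ Y := by
    rcases hbipadj hwi with ⟨_, h⟩ | ⟨h, _⟩
    · exact h
    · exact absurd (hxX i) (Set.disjoint_right.mp hdisj h)
  have hne_xy : ∀ s t : ZMod k, x s ≠ y t := by
    intro s t h
    exact Set.disjoint_left.mp hdisj (hxX s) (h ▸ hyY t)
  have hx₀y : ∀ t : ZMod k, x₀ ≠ y t := by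
    intro t h
    exact Set.disjoint_left.mp hdisj hx₀ (h ▸ hyY t)
  have hx₀x : ∀ t : ZMod k, x₀ ≠ x t := by
    intro t h
    have : x t ∈ Set.range x := ⟨t, rfl⟩
    rw [hbase] at this
    exact this.2 h.symm
  have hwx : ∀ t : ZMod k, w ≠ x t := by
    intro t h
    exact hw (Or.inl ⟨t, h.symm⟩)
  have hwy : ∀ t : ZMod k, w ≠ y t := by
    intro t h
    exact hw (Or.inr ⟨t, h.symm⟩)
  have hwx₀ : w ≠ x₀ := fun h => Set.disjoint_left.mp hdisj (h ▸ hx₀) hwY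
  -- index arithmetic
  set d : ℕ := (j - i).val with hddef
  have hd1 : 1 ≤ d := by
    rcases Nat.eq_zero_or_pos d with h | h
    · exfalso
      have h2 : j - i = 0 := by rwa [hddef, ZMod.val_eq_zero] at h
      have h3 : i = j := by linear_combination -h2
      exact hij h3
    · exact h
  have hd2 : d < k := ZMod.val_lt _
  have hdcast : ((d : ℕ) : ZMod k) = j - i := by
    rw [hddef]; simp [ZMod.natCast_val, ZMod.cast_id]
  have castinj : ∀ a b : ℕ, a < k → b < k → ((a : ZMod k) = (b : ZMod k)) → a = b := by
    intro a b ha hb h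
    have := congrArg ZMod.val h
    rwa [ZMod.val_cast_of_lt ha, ZMod.val_cast_of_lt hb] at this
  have castne : ∀ c : ℕ, 0 < c → c < k → ((c : ZMod k) ≠ 0) := by
    intro c h1 h2 h
    rw [ZMod.natCast_eq_zero_iff] at h
    exact absurd (Nat.le_of_dvd h1 h) (by omega)
  -- the cyclic vertex sequence
  set f : ℕ → V := fun m =>
    if m = 0 then x₀
    else if m ≤ 2*d then (if m % 2 = 1 then y (i + ((m-1)/2 : ℕ)) else x (i + ((m/2 : ℕ) : ZMod k)))
    else if m = 2*d+1 then w
    else if m ≤ 2*k+1 then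
      (if m % 2 = 0 then x (i - ((m - (2*d+2))/2 : ℕ)) else y (i - 1 - ((m - (2*d+3))/2 : ℕ)))
    else x₀ with hfdef
  have hf0 : f 0 = x₀ := by simp [hfdef]
  have hfy1 : ∀ q : ℕ, q < d → f (2*q+1) = y (i + (q : ℕ)) := by
    intro q hq
    simp only [hfdef]
    rw [if_neg (by omega), if_pos (by omega), if_pos (by omega)]
    have e : (2*q+1-1)/2 = q := by omega
    rw [e]
  have hfx1 : ∀ q : ℕ, 1 ≤ q → q ≤ d → f (2*q) = x (i + (q : ℕ)) := by
    intro q h1 h2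
    simp only [hfdef]
    rw [if_neg (by omega), if_pos (by omega), if_neg (by omega)]
    have e : (2*q)/2 = q := by omega
    rw [e]
  have hfw : f (2*d+1) = w := by
    simp only [hfdef]
    rw [if_neg (by omega), if_neg (by omega), if_pos trivial]
  have hfx2 : ∀ q : ℕ, q ≤ k-d-1 → f (2*d+2+2*q) = x (i - (q : ℕ)) := by
    intro q hq
    simp only [hfdef]
    rw [if_neg (by omega), if_neg (by omega), if_neg (by omega), if_pos (by omega),
      if_pos (by omega)]
    have e : (2*d+2+2*q - (2*d+2))/2 = q := by omega
    rw [e]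
  have hfy2 : ∀ q : ℕ, q ≤ k-d-1 → f (2*d+3+2*q) = y (i - 1 - (q : ℕ)) := by
    intro q hq
    simp only [hfdef]
    rw [if_neg (by omega), if_neg (by omega), if_neg (by omega), if_pos (by omega),
      if_neg (by omega)]
    have e : (2*d+3+2*q - (2*d+3))/2 = q := by omega
    rw [e]
  have hfend : f (2*k+2) = x₀ := by
    simp only [hfdef]
    rw [if_neg (by omega), if_neg (by omega), if_neg (by omega), if_neg (by omega)]
  -- classification of indices
  have hclass : ∀ m, m < 2*k+2 → (m = 0) ∨ (m = 2*d+1) ∨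
      (∃ q : ℕ, (1 ≤ q ∧ q ≤ d ∧ m = 2*q) ∨ (q ≤ k-d-1 ∧ m = 2*d+2+2*q)) ∨
      (∃ q : ℕ, (q < d ∧ m = 2*q+1) ∨ (q ≤ k-d-1 ∧ m = 2*d+3+2*q)) := by
    intro m hm
    rcases Nat.even_or_odd m with ⟨q, hq⟩ | ⟨q, hq⟩
    · by_cases h0 : q = 0
      · exact Or.inl (by omega)
      · by_cases h1 : q ≤ d
        · exact Or.inr (Or.inr (Or.inl ⟨q, Or.inl ⟨by omega, h1, by omega⟩⟩))
        · exact Or.inr (Or.inr (Or.inl ⟨q - d - 1, Or.inr ⟨by omega, by omega⟩⟩))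
    · by_cases h1 : q < d
      · exact Or.inr (Or.inr (Or.inr ⟨q, Or.inl ⟨h1, by omega⟩⟩))
      · by_cases h2 : q = d
        · exact Or.inr (Or.inl (by omega))
        · exact Or.inr (Or.inr (Or.inr ⟨q - d - 1, Or.inr ⟨by omega, by omega⟩⟩))
  -- which indices can take each kind of value
  have hx₀case : ∀ m, m < 2*k+2 → f m = x₀ → m = 0 := by
    intro m hm h
    rcases hclass m hm with h0 | h1 | ⟨q, hq | hq⟩ | ⟨q, hq | hq⟩
    · exact h0
    · rw [h1, hfw] at h; exact absurd h.symm hwx₀.symm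
    · rw [hq.2.2, hfx1 q hq.1 hq.2.1] at h; exact absurd h.symm (hx₀x _)
    · rw [hq.2, hfx2 q hq.1] at h; exact absurd h.symm (hx₀x _)
    · rw [hq.2, hfy1 q hq.1] at h; exact absurd h.symm (hx₀y _)
    · rw [hq.2, hfy2 q hq.1] at h; exact absurd h.symm (hx₀y _)
  have hwcase : ∀ m, m < 2*k+2 → f m = w → m = 2*d+1 := by
    intro m hm h
    rcases hclass m hm with h0 | h1 | ⟨q, hq | hq⟩ | ⟨q, hq | hq⟩
    · rw [h0, hf0] at h; exact absurd h.symm hwx₀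
    · exact h1
    · rw [hq.2.2, hfx1 q hq.1 hq.2.1] at h; exact absurd h.symm (hwx _)
    · rw [hq.2, hfx2 q hq.1] at h; exact absurd h.symm (hwx _)
    · rw [hq.2, hfy1 q hq.1] at h; exact absurd h.symm (hwy _)
    · rw [hq.2, hfy2 q hq.1] at h; exact absurd h.symm (hwy _)
  have hxcase : ∀ m, m < 2*k+2 → ∀ t : ZMod k, f m = x t →
      (∃ q : ℕ, 1 ≤ q ∧ q ≤ d ∧ m = 2*q ∧ ((q : ZMod k)) = t - i) ∨
      (∃ q : ℕ, q ≤ k-d-1 ∧ m = 2*d+2+2*q ∧ ((q : ZMod k)) = i - t) := by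
    intro m hm t h
    rcases hclass m hm with h0 | h1 | ⟨q, hq | hq⟩ | ⟨q, hq | hq⟩
    · rw [h0, hf0] at h; exact absurd h (hx₀x _)
    · rw [h1, hfw] at h; exact absurd h (hwx _)
    · rw [hq.2.2, hfx1 q hq.1 hq.2.1] at h
      have := hxinj h
      exact Or.inl ⟨q, hq.1, hq.2.1, hq.2.2, by first | linear_combination this | linear_combination -this⟩
    · rw [hq.2, hfx2 q hq.1] at h
      have := hxinj h
      exact Or.inr ⟨q, hq.1, hq.2, by first | linear_combination this | linear_combination -this⟩
    · rw [hq.2, hfy1 q hq.1] at h; exact absurd h.symm (hne_xy _ _)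
    · rw [hq.2, hfy2 q hq.1] at h; exact absurd h.symm (hne_xy _ _)
  have hycase : ∀ m, m < 2*k+2 → ∀ t : ZMod k, f m = y t →
      (∃ q : ℕ, q < d ∧ m = 2*q+1 ∧ ((q : ZMod k)) = t - i) ∨
      (∃ q : ℕ, q ≤ k-d-1 ∧ m = 2*d+3+2*q ∧ ((q : ZMod k)) = i - 1 - t) := by
    intro m hm t h
    rcases hclass m hm with h0 | h1 | ⟨q, hq | hq⟩ | ⟨q, hq | hq⟩
    · rw [h0, hf0] at h; exact absurd h (hx₀y _)
    · rw [h1, hfw] at h; exact absurd h (hwy _)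
    · rw [hq.2.2, hfx1 q hq.1 hq.2.1] at h; exact absurd h (hne_xy _ _)
    · rw [hq.2, hfx2 q hq.1] at h; exact absurd h (hne_xy _ _)
    · rw [hq.2, hfy1 q hq.1] at h
      have := hyinj h
      exact Or.inl ⟨q, hq.1, hq.2, by first | linear_combination this | linear_combination -this⟩
    · rw [hq.2, hfy2 q hq.1] at h
      have := hyinj h
      exact Or.inr ⟨q, hq.1, hq.2, by first | linear_combination this | linear_combination -this⟩
  -- injectivity
  have hinj : ∀ a, a < 2*k+2 → ∀ b, b < 2*k+2 → f a = f b → a = b := by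
    intro a ha b hb hfab
    rcases hclass a ha with h0 | h1 | ⟨q, hq | hq⟩ | ⟨q, hq | hq⟩
    · rw [h0, hf0] at hfab
      rw [h0, hx₀case b hb hfab.symm]
    · rw [h1, hfw] at hfab
      rw [h1, hwcase b hb hfab.symm]
    · obtain ⟨h1, h2, rfl⟩ := hq
      rw [hfx1 q h1 h2] at hfab
      rcases hxcase b hb _ hfab.symm with ⟨p, hp1, hp2, rfl, hp4⟩ | ⟨p, hp1, rfl, hp4⟩
      · have : p = q := castinj p q (by omega) (by omega) (by first | linear_combination hp4 | linear_combination -hp4)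
        omega
      · exfalso
        have h5 : ((q + p : ℕ) : ZMod k) = 0 := by push_cast; first | linear_combination hp4 | linear_combination -hp4
        exact castne (q + p) (by omega) (by omega) h5
    · obtain ⟨h1, rfl⟩ := hq
      rw [hfx2 q h1] at hfab
      rcases hxcase b hb _ hfab.symm with ⟨p, hp1, hp2, rfl, hp4⟩ | ⟨p, hp1, rfl, hp4⟩
      · exfalso
        have h5 : ((p + q : ℕ) : ZMod k) = 0 := by push_cast; first | linear_combination hp4 | linear_combination -hp4
        exact castne (p + q) (by omega) (by omega) h5
      · have : p = q := castinj p q (by omega) (by omega) (by first | linear_combination hp4 | linear_combination -hp4)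
        omega
    · obtain ⟨h1, rfl⟩ := hq
      rw [hfy1 q h1] at hfab
      rcases hycase b hb _ hfab.symm with ⟨p, hp1, rfl, hp4⟩ | ⟨p, hp1, rfl, hp4⟩
      · have : p = q := castinj p q (by omega) (by omega) (by first | linear_combination hp4 | linear_combination -hp4)
        omega
      · exfalso
        have h5 : ((q + p + 1 : ℕ) : ZMod k) = 0 := by push_cast; first | linear_combination hp4 | linear_combination -hp4
        exact castne (q + p + 1) (by omega) (by omega) h5
    · obtain ⟨h1, rfl⟩ := hq
      rw [hfy2 q h1] at hfab
      rcases hycase b hb _ hfab.symm with ⟨p, hp1, rfl, hp4⟩ | ⟨p, hp1, rfl, hp4⟩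
      · exfalso
        have h5 : ((p + q + 1 : ℕ) : ZMod k) = 0 := by push_cast; first | linear_combination hp4 | linear_combination -hp4
        exact castne (p + q + 1) (by omega) (by omega) h5
      · have : p = q := castinj p q (by omega) (by omega) (by first | linear_combination hp4 | linear_combination -hp4)
        omega
  -- adjacency
  have hadjf : ∀ m, m < 2*k+2 → G.Adj (f m) (f (m+1)) := by
    intro m hm
    rcases Nat.even_or_odd m with ⟨q, hq⟩ | ⟨q, hq⟩
    · -- m even, m = 2*q
      by_cases h0 : q = 0
      · have e1 : f (2*0+1) = y (i + ((0:ℕ) : ZMod k)) := hfy1 0 (by omega)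
        have : m = 0 := by omega
        rw [this, hf0]
        show G.Adj x₀ (f (2*0+1))
        rw [e1]
        simpa using hyi
      · by_cases h1 : q ≤ d
        · by_cases h2 : q = d
          · -- m = 2d : x j — w
            have : m = 2*d := by omega
            rw [this, hfx1 d hd1 le_rfl]
            show G.Adj _ (f (2*d+1))
            rw [hfw]
            have : i + ((d : ℕ) : ZMod k) = j := by rw [hdcast]; ring
            rw [this]
            exact hwj
          · -- forward even : x(i+q) — y(i+q)
            have hmq : m = 2*q := by omega
            rw [hmq, hfx1 q (by omega) h1]
            show G.Adj _ (f (2*q+1))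
            rw [hfy1 q (by omega)]
            exact hadj1 _
        · -- backward even: m = 2d+2+2q', x(i-q') — y(i-1-q')
          set p : ℕ := q - d - 1 with hp
          have hmq : m = 2*d+2+2*p := by omega
          have hple : p ≤ k - d - 1 := by omega
          rw [hmq, hfx2 p hple]
          rw [show 2*d+2+2*p+1 = 2*d+3+2*p from by omega, hfy2 p hple]
          have e9 : i - (p : ZMod k) = (i - 1 - (p:ZMod k)) + 1 := by ring
          rw [e9]
          exact (hadj2 _).symm
    · -- m odd, m = 2*q+1
      by_cases h1 : q < d
      · -- forward odd: y(i+q) — x(i+q+1)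
        rw [hq, hfy1 q h1]
        show G.Adj _ (f (2*(q+1)))
        rw [hfx1 (q+1) (by omega) (by omega)]
        have e9 : i + ((q+1 : ℕ) : ZMod k) = (i + (q:ZMod k)) + 1 := by push_cast; ring
        rw [e9]
        exact hadj2 _
      · by_cases h2 : q = d
        · -- m = 2d+1 : w — x i
          have hm' : m = 2*d+1 := by omega
          rw [hm', hfw]
          show G.Adj _ (f (2*d+2+2*0))
          rw [hfx2 0 (by omega)]
          simpa using hwi.symm
        · -- backward odd
          set p : ℕ := q - d - 1 with hp
          have hmq : m = 2*d+3+2*p := by omega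
          by_cases h3 : m = 2*k+1
          · -- last edge : y j — x₀
            have hpval : p = k - d - 1 := by omega
            rw [hmq, hfy2 p (by omega)]
            have h4 : m + 1 = 2*k+2 := by omega
            have h5 : (2*d+3+2*p) + 1 = 2*k+2 := by omega
            rw [h5, hfend]
            have e2 : i - 1 - ((p : ℕ) : ZMod k) = j := by
              rw [hpval]
              have e3 : ((k - d - 1 : ℕ) : ZMod k) = ((k:ℕ) : ZMod k) - (d:ZMod k) - 1 := by
                rw [show (k - d - 1 : ℕ) = k - (d+1) from by omega, Nat.cast_sub (by omega)]
                push_cast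
                ring
              rw [e3, ZMod.natCast_self]
              have := hdcast
              linear_combination this
            rw [e2]
            exact hyj.symm
          · -- interior backward odd: y(i-1-p) — x(i-(p+1))
            have hple : p + 1 ≤ k - d - 1 := by omega
            rw [hmq, hfy2 p (by omega)]
            rw [show 2*d+3+2*p+1 = 2*d+2+2*(p+1) from by omega, hfx2 (p+1) hple]
            have e9 : i - ((p+1 : ℕ) : ZMod k) = i - 1 - (p:ZMod k) := by push_cast; ring
            rw [e9]
            exact (hadj1 _).symm
  -- build the cycle and contradict hno
  obtain ⟨v, c, hc, hmem⟩ := CycAux.exists_cycle_of_seq G (2*k+2) (by omega) f hinj hadjf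
    (by rw [hfend, hf0])
  apply hno
  refine ⟨v, c, hc, fun u _ => Set.mem_univ u, ?_⟩
  ext u
  constructor
  · rintro ⟨_, hu⟩; exact hu
  · intro hu
    refine ⟨?_, hu⟩
    show u ∈ c.support
    by_cases h0 : u = x₀
    · have := hmem 0 (by omega)
      rwa [hf0, ← h0] at this
    · have : u ∈ Set.range x := by rw [hbase]; exact ⟨hu, h0⟩
      obtain ⟨t, rfl⟩ := this
      set r : ℕ := (t - i).val with hr
      have hrcast : ((r : ℕ) : ZMod k) = t - i := by
        rw [hr]; simp [ZMod.natCast_val, ZMod.cast_id]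
      have hrlt : r < k := ZMod.val_lt _
      by_cases h1 : 1 ≤ r ∧ r ≤ d
      · have := hmem (2*r) (by omega)
        rwa [hfx1 r h1.1 h1.2, show i + ((r:ℕ) : ZMod k) = t from by rw [hrcast]; ring] at this
      · by_cases h2 : r = 0
        · have ht : t = i := by
            have : t - i = 0 := by rw [← hrcast, h2]; simp
            linear_combination this
          have := hmem (2*d+2) (by omega)
          rw [show 2*d+2 = 2*d+2+2*0 from by omega, hfx2 0 (by omega)] at this
          rw [ht]
          simpa using this
        · -- r ≥ d+1 ; backward with s = k - r
          have hrge : d + 1 ≤ r := by omega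
          set s : ℕ := k - r with hs
          have hsle : s ≤ k - d - 1 := by omega
          have hscast : ((s : ℕ) : ZMod k) = i - t := by
            rw [hs, Nat.cast_sub (by omega), ZMod.natCast_self, hrcast]
            ring
          have := hmem (2*d+2+2*s) (by omega)
          rwa [hfx2 s hsle, show i - ((s:ℕ) : ZMod k) = t from by rw [hscast]; ring] at this
end

section
/- Let G be a bipartite graph with parts X and Y, let x_0 ∈ X, and let C = x_1 y_1 … x_k y_k x_1 be a cycle with base vertex set X − {x_0}. Suppose G has no cycle based on X. If y_i ∈ N(x_0), then x_i and x_0 have no common neighbor outside V(C), and x_{i+1} and x_0 have no common neighbor outside V(C). -/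
open SimpleGraph Set

def chain {V : Type*} {k : ℕ} (G : SimpleGraph V) (x y : ZMod k → V)
    (h1 : ∀ i, G.Adj (x i) (y i)) (h2 : ∀ i, G.Adj (y i) (x (i + 1))) :
    (n : ℕ) → (j : ZMod k) → G.Walk (x j) (x (j + n))
  | 0, j => Walk.nil.copy rfl (congrArg x (by push_cast; ring))
  | (n+1), j =>
      Walk.cons (h1 j) (Walk.cons (h2 j) ((chain G x y h1 h2 n (j+1)).copy rfl
        (congrArg x (by push_cast; ring))))

def descr {V : Type*} {k : ℕ} (x y : ZMod k → V) : ℕ → ZMod k → List V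
  | 0, j => [x j]
  | (n+1), j => x j :: y j :: descr x y n (j+1)

lemma chain_support {V : Type*} {k : ℕ} (G : SimpleGraph V) (x y : ZMod k → V)
    (h1 : ∀ i, G.Adj (x i) (y i)) (h2 : ∀ i, G.Adj (y i) (x (i + 1))) :
    ∀ (n : ℕ) (j : ZMod k), (chain G x y h1 h2 n j).support = descr x y n j
  | 0, j => by simp [chain, descr]
  | (n+1), j => by
      simp [chain, descr, chain_support G x y h1 h2 n (j+1)]

lemma mem_descr {V : Type*} {k : ℕ} (x y : ZMod k → V) :
    ∀ (n : ℕ) (j : ZMod k) (u : V), u ∈ descr x y n j ↔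
      (∃ m : ℕ, m ≤ n ∧ u = x (j + m)) ∨ (∃ m : ℕ, m < n ∧ u = y (j + m))
  | 0, j, u => by simp [descr]
  | (n+1), j, u => by
      simp only [descr, List.mem_cons, mem_descr x y n (j+1)]
      constructor
      · rintro (rfl | rfl | (⟨m, hm, rfl⟩ | ⟨m, hm, rfl⟩))
        · exact Or.inl ⟨0, by simp⟩
        · exact Or.inr ⟨0, by omega, by simp⟩
        · exact Or.inl ⟨m+1, by omega, congrArg x (by push_cast; ring)⟩
        · exact Or.inr ⟨m+1, by omega, congrArg y (by push_cast; ring)⟩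
      · rintro (⟨m, hm, rfl⟩ | ⟨m, hm, rfl⟩)
        · match m, hm with
          | 0, _ => exact Or.inl (by simp)
          | (m+1), hm =>
              exact Or.inr (Or.inr (Or.inl ⟨m, by omega, congrArg x (by push_cast; ring)⟩))
        · match m, hm with
          | 0, _ => exact Or.inr (Or.inl (by simp))
          | (m+1), hm =>
              exact Or.inr (Or.inr (Or.inr ⟨m, by omega, congrArg y (by push_cast; ring)⟩))

lemma nodup_descr {V : Type*} {k : ℕ} (x y : ZMod k → V)
    (hxinj : Function.Injective x) (hyinj : Function.Injective y)
    (hxy : ∀ a b, x a ≠ y b) :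
    ∀ (n : ℕ), n < k → ∀ (j : ZMod k), (descr x y n j).Nodup
  | 0, _, j => by simp [descr]
  | (n+1), hn, j => by
      haveI : NeZero k := ⟨by omega⟩
      have key : ∀ m : ℕ, m + 1 < k → (j : ZMod k) ≠ j + 1 + (m : ℕ) := by
        intro m hm h
        have h0 : ((m + 1 : ℕ) : ZMod k) = 0 := by
          have := h.symm
          push_cast at this ⊢
          linear_combination this
        rw [ZMod.natCast_eq_zero_iff] at h0
        have := Nat.le_of_dvd (by omega) h0
        omega
      simp only [descr, List.nodup_cons, List.mem_cons, mem_descr]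
      refine ⟨?_, ?_, nodup_descr x y hxinj hyinj hxy n (by omega) (j+1)⟩
      · push_neg
        refine ⟨hxy j j, ?_, ?_⟩
        · intro m hm h
          exact key m (by omega) (hxinj h)
        · intro m hm h
          exact hxy j (j+1+m) h
      · push_neg
        refine ⟨?_, ?_⟩
        · intro m hm h
          exact hxy (j+1+m) j h.symm
        · intro m hm h
          exact key m (by omega) (hyinj h)

/-- Key lemma: a common neighbor of `x (i+1)` and `x₀` outside the cycle yields a cycle based on `X`. -/
lemma key {V : Type*} (G : SimpleGraph V) (X Y : Set V)
    (hbip : IsBipartition G X Y) (x₀ : V) (hx₀ : x₀ ∈ X)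
    (k : ℕ) (hk : 2 ≤ k) (x y : ZMod k → V)
    (hxinj : Function.Injective x) (hyinj : Function.Injective y)
    (hxX : ∀ i, x i ∈ X) (hyY : ∀ i, y i ∈ Y)
    (hadj1 : ∀ i, G.Adj (x i) (y i)) (hadj2 : ∀ i, G.Adj (y i) (x (i + 1)))
    (hbase : Set.range x = X \ {x₀})
    (i : ZMod k) (hyi : G.Adj x₀ (y i)) (w : V)
    (hw : w ∉ Set.range x ∪ Set.range y)
    (hw1 : G.Adj (x (i + 1)) w) (hw0 : G.Adj x₀ w) :
    CycleOnWithin G X X Set.univ := by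
  obtain ⟨hXY, hdisj, hedge⟩ := hbip
  haveI : NeZero k := ⟨by omega⟩
  have hxy : ∀ a b, x a ≠ y b := by
    intro a b h
    exact hdisj.ne_of_mem (hxX a) (hyY b) h
  have hx₀x : ∀ a, x₀ ≠ x a := by
    intro a h
    have : x a ∈ X \ {x₀} := hbase ▸ Set.mem_range_self a
    exact this.2 h.symm
  have hx₀y : ∀ a, x₀ ≠ y a := fun a h => hdisj.ne_of_mem hx₀ (hyY a) h
  have hwY : w ∈ Y := by
    rcases hedge hw1 with ⟨_, h⟩ | ⟨h, _⟩
    · exact h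
    · exact (hdisj.ne_of_mem (hxX (i+1)) h rfl).elim
  have hwx : ∀ a, w ≠ x a := fun a h => (hw (Or.inl ⟨a, h.symm⟩))
  have hwy : ∀ a, w ≠ y a := fun a h => (hw (Or.inr ⟨a, h.symm⟩))
  have hwx₀ : w ≠ x₀ := fun h => hdisj.ne_of_mem hx₀ hwY h.symm
  -- the long path around the cycle
  have hcast : x (i + 1 + ((k - 1 : ℕ) : ZMod k)) = x i := by
    congr 1
    rw [Nat.cast_sub (by omega), ZMod.natCast_self]
    ring
  let Q : G.Walk (x (i+1)) (x i) :=
    (chain G x y hadj1 hadj2 (k-1) (i+1)).copy rfl hcast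
  have hQsupp : Q.support = descr x y (k-1) (i+1) := by
    simp [Q, chain_support]
  have hQmem : ∀ u, u ∈ Q.support ↔
      (∃ m : ℕ, m ≤ k-1 ∧ u = x (i + 1 + m)) ∨ (∃ m : ℕ, m < k-1 ∧ u = y (i + 1 + m)) := by
    intro u; rw [hQsupp, mem_descr]
  have hQnodup : Q.support.Nodup := by
    rw [hQsupp]; exact nodup_descr x y hxinj hyinj hxy (k-1) (by omega) (i+1)
  have hxQ : ∀ a, x a ∈ Q.support := by
    intro a
    rw [hQmem]
    refine Or.inl ⟨(a - (i+1)).val, by have := ZMod.val_lt (a - (i+1)); omega, ?_⟩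
    congr 1
    rw [ZMod.natCast_val, ZMod.cast_id]
    ring
  have hx₀Q : x₀ ∉ Q.support := by
    rw [hQmem]
    rintro (⟨m, _, h⟩ | ⟨m, _, h⟩)
    · exact hx₀x _ h
    · exact hx₀y _ h
  have hyiQ : y i ∉ Q.support := by
    rw [hQmem]
    rintro (⟨m, _, h⟩ | ⟨m, hm, h⟩)
    · exact hxy _ _ h.symm
    · have := hyinj h
      have h0 : ((m + 1 : ℕ) : ZMod k) = 0 := by
        push_cast
        linear_combination -this
      rw [ZMod.natCast_eq_zero_iff] at h0
      have := Nat.le_of_dvd (by omega) h0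
      omega
  have hwQ : w ∉ Q.support := by
    rw [hQmem]
    rintro (⟨m, _, h⟩ | ⟨m, _, h⟩)
    · exact hwx _ h
    · exact hwy _ h
  -- build the cycle
  let tailW : G.Walk (x i) x₀ := Walk.cons (hadj1 i) (Walk.cons hyi.symm Walk.nil)
  let rest : G.Walk w x₀ := Walk.cons hw1.symm (Q.append tailW)
  let C : G.Walk x₀ x₀ := Walk.cons hw0 rest
  have hrestsupp : rest.support = w :: (Q.support ++ [y i, x₀]) := by
    simp [rest, tailW, Walk.support_append]
  have hCsupp : C.support = x₀ :: w :: (Q.support ++ [y i, x₀]) := by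
    simp [C, hrestsupp]
  refine ⟨x₀, C, ?_, by simp, ?_⟩
  · rw [Walk.cons_isCycle_iff]
    constructor
    · rw [Walk.isPath_def, hrestsupp]
      simp only [List.nodup_cons, List.mem_append, List.mem_cons, List.nodup_append,
        List.mem_singleton, List.not_mem_nil, or_false, List.nodup_cons, List.nodup_nil]
      refine ⟨?_, hQnodup, ?_, ?_⟩
      · rintro (h | h | h)
        · exact hwQ h
        · exact hwy i h
        · exact hwx₀ h
      · exact ⟨fun h => hx₀y i h.symm, not_false, trivial⟩
      · intro a ha
        intro b hb h; subst h; revert hb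
        rintro (rfl | rfl)
        · exact hyiQ ha
        · exact hx₀Q ha
    · intro hmem
      have : rest.edges = s(w, x (i+1)) :: (Q.edges ++ [s(x i, y i), s(y i, x₀)]) := by
        simp [rest, tailW, Walk.edges_append]
      rw [this] at hmem
      simp only [List.mem_cons, List.mem_append, List.mem_singleton] at hmem
      rcases hmem with h | h | h | h
      · rw [Sym2.eq_iff] at h
        rcases h with ⟨h1, _⟩ | ⟨h1, h2⟩
        · exact hwx₀ h1.symm
        · exact hx₀x _ h1
      · exact hx₀Q (Walk.fst_mem_support_of_mem_edges Q h)
      · rw [Sym2.eq_iff] at h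
        rcases h with ⟨h1, _⟩ | ⟨h1, h2⟩
        · exact hx₀x _ h1
        · exact hx₀y _ h1
      · rw [Sym2.eq_iff] at h
        rcases h with (⟨h1, _⟩ | ⟨_, h2⟩) | h
        · exact hx₀y _ h1
        · exact hwy _ h2
        · simp at h
  · apply Set.eq_of_subset_of_subset
    · exact Set.inter_subset_right
    · intro u hu
      refine ⟨?_, hu⟩
      have hu' : u = x₀ ∨ u ∈ Set.range x := by
        by_cases h : u = x₀
        · exact Or.inl h
        · exact Or.inr (hbase ▸ ⟨hu, h⟩)
      simp only [Set.mem_setOf_eq, hCsupp, List.mem_cons, List.mem_append]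
      rcases hu' with rfl | ⟨a, rfl⟩
      · exact Or.inl rfl
      · exact Or.inr (Or.inr (Or.inl (hxQ a)))

theorem stmt_2 {V : Type*} [Fintype V] (G : SimpleGraph V) (X Y : Set V)
    (hbip : IsBipartition G X Y) (x₀ : V) (hx₀ : x₀ ∈ X)
    (k : ℕ) (hk : 2 ≤ k) (x y : ZMod k → V)
    (hxinj : Function.Injective x) (hyinj : Function.Injective y)
    (hxX : ∀ i, x i ∈ X) (hyY : ∀ i, y i ∈ Y)
    (hadj1 : ∀ i, G.Adj (x i) (y i)) (hadj2 : ∀ i, G.Adj (y i) (x (i + 1)))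
    (hbase : Set.range x = X \ {x₀})
    (hno : ¬ CycleOnWithin G X X Set.univ) :
    ∀ i : ZMod k, G.Adj x₀ (y i) →
      (∀ w, w ∉ Set.range x ∪ Set.range y → ¬ (G.Adj (x i) w ∧ G.Adj x₀ w)) ∧
      (∀ w, w ∉ Set.range x ∪ Set.range y → ¬ (G.Adj (x (i + 1)) w ∧ G.Adj x₀ w)) := by
  intro i hyi
  constructor
  · rintro w hw ⟨hwi, hw0⟩
    apply hno
    refine key G X Y hbip x₀ hx₀ k hk (fun j => x (-j)) (fun j => y (-j - 1))
      (fun a b h => neg_injective (hxinj h))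
      (fun a b h => by have := hyinj h; linear_combination -this)
      (fun j => hxX _) (fun j => hyY _)
      (fun j => by beta_reduce; rw [show x (-j) = x (-j - 1 + 1) from congrArg x (by ring)]; exact (hadj2 (-j - 1)).symm)
      (fun j => by beta_reduce; rw [show x (-(j + 1)) = x (-j - 1) from congrArg x (by ring)]; exact (hadj1 (-j - 1)).symm)
      ?_ (-i - 1) ?_ w ?_ ?_ hw0
    · rw [← hbase]
      ext u
      constructor
      · rintro ⟨a, rfl⟩; exact ⟨-a, rfl⟩
      · rintro ⟨a, rfl⟩; exact ⟨-a, by simp⟩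
    · beta_reduce; rw [show y (-(-i - 1) - 1) = y i from congrArg y (by ring)]; exact hyi
    · rintro (⟨a, rfl⟩ | ⟨a, rfl⟩)
      · exact hw (Or.inl ⟨-a, rfl⟩)
      · exact hw (Or.inr ⟨-a - 1, rfl⟩)
    · beta_reduce; rw [show x (-(-i - 1 + 1)) = x i from congrArg x (by ring)]; exact hwi
  · rintro w hw ⟨hwi, hw0⟩
    exact hno (key G X Y hbip x₀ hx₀ k hk x y hxinj hyinj hxX hyY hadj1 hadj2 hbase
      i hyi w hw hwi hw0)
end

section
/- Every bipartite graph G with parts X and Y satisfying condition (*) is 3-cyclic: for every subset X' ⊆ X with |X'| = 3, G contains a cycle C with V(C) ∩ X = X'. -/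
open SimpleGraph Set

/- ### Auxiliary lemmas -/

lemma reach_closed {W : Type*} {H : SimpleGraph W} (P : W → Prop)
    (hP : ∀ ⦃u v⦄, H.Adj u v → P u → P v) {a b : W} (h : H.Reachable a b) (ha : P a) : P b := by
  obtain ⟨w⟩ := h
  induction w with
  | nil => exact ha
  | cons h p ih => exact ih (hP h ha)

lemma nbr_exists {V : Type*} {G : SimpleGraph V} {T : Set V} (hc : (G.induce T).Connected)
    {a b : V} (ha : a ∈ T) (hb : b ∈ T) (hab : a ≠ b) : ∃ v ∈ T, G.Adj a v := by
  obtain ⟨w⟩ := hc.preconnected ⟨a, ha⟩ ⟨b, hb⟩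
  cases w with
  | nil => exact absurd rfl hab
  | @cons _ u _ h p => exact ⟨u.1, u.2, h⟩

lemma sdr3 {α : Type*} [DecidableEq α] (A B C : Finset α) (hA : A.Nonempty) (hB : B.Nonempty)
    (hC : C.Nonempty) (hAB : 2 ≤ (A ∪ B).card) (hBC : 2 ≤ (B ∪ C).card)
    (hCA : 2 ≤ (C ∪ A).card) (hABC : 3 ≤ (A ∪ B ∪ C).card) :
    ∃ a ∈ A, ∃ b ∈ B, ∃ c ∈ C, a ≠ b ∧ b ≠ c ∧ a ≠ c := by
  have := (Finset.all_card_le_biUnion_card_iff_exists_injective ![A, B, C]).mp ?_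
  · obtain ⟨f, hinj, hf⟩ := this
    exact ⟨f 0, hf 0, f 1, hf 1, f 2, hf 2, fun h => (by decide : (0:Fin 3) ≠ 1) (hinj h),
      fun h => (by decide : (1:Fin 3) ≠ 2) (hinj h), fun h => (by decide : (0:Fin 3) ≠ 2) (hinj h)⟩
  · intro s
    fin_cases s <;>
      simp_all [Finset.card_le_card, Finset.union_comm, Finset.union_assoc, Finset.union_left_comm,
        Finset.Nonempty.card_pos, Finset.card_pos]
    · exact le_trans hAB (Finset.card_le_card (by intro x hx; simp at hx ⊢; tauto))
    · exact le_trans hCA (Finset.card_le_card (by intro x hx; simp at hx ⊢; tauto))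
    · exact le_trans hBC (Finset.card_le_card (by intro x hx; simp at hx ⊢; tauto))
    · exact le_trans hABC (Finset.card_le_card (by intro x hx; simp at hx ⊢; tauto))


lemma ncard_union_toFinset {α : Type*} [DecidableEq α] {s t : Set α} (hs : s.Finite)
    (ht : t.Finite) : (s ∪ t).ncard = (hs.toFinset ∪ ht.toFinset).card := by
  rw [Set.ncard_eq_toFinset_card _ (hs.union ht)]
  congr 1
  ext a
  simp

lemma six_cycle {V : Type*} {G : SimpleGraph V} {x1 x2 x3 a b c : V}
    (dab : a ≠ b) (dbc : b ≠ c) (dac : a ≠ c)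
    (d12 : x1 ≠ x2) (d13 : x1 ≠ x3) (d23 : x2 ≠ x3)
    (d1a : x1 ≠ a) (d1b : x1 ≠ b) (d1c : x1 ≠ c)
    (d2a : x2 ≠ a) (d2b : x2 ≠ b) (d2c : x2 ≠ c)
    (d3a : x3 ≠ a) (d3b : x3 ≠ b) (d3c : x3 ≠ c)
    (h1 : G.Adj x1 a) (h2 : G.Adj a x2) (h3 : G.Adj x2 b) (h4 : G.Adj b x3)
    (h5 : G.Adj x3 c) (h6 : G.Adj c x1) :
    ∃ w : G.Walk x1 x1, w.IsCycle ∧ {u | u ∈ w.support} = {x1, a, x2, b, x3, c} := by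
  refine ⟨Walk.cons h1 (Walk.cons h2 (Walk.cons h3 (Walk.cons h4 (Walk.cons h5
    (Walk.cons h6 Walk.nil))))), ?_, ?_⟩
  · simp [Walk.isCycle_def, Walk.isTrail_def, List.nodup_cons, Sym2.eq_iff]
    tauto
  · ext u
    simp [Set.mem_setOf_eq]
    tauto

theorem stmt_4 {V : Type*} [Fintype V] (G : SimpleGraph V) (X Y : Set V)
    (hbip : IsBipartition G X Y) (hX : 3 ≤ X.ncard) (hstar : StarCond G X Y) :
    ∀ X' ⊆ X, X'.ncard = 3 → CycleOnWithin G X X' Set.univ := by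
  classical
  intro X' hsub h3
  obtain ⟨x1, x2, x3, d12, d13, d23, rfl⟩ := Set.ncard_eq_three.mp h3
  obtain ⟨-, hdisj, hbipadj⟩ := hbip
  set tri : Set V := {x1, x2, x3} with htri
  set N : Set V := superNbhd G Y tri with hNdef
  set S : Set V := tri ∪ N with hSdef
  obtain ⟨hcard, h2conn⟩ := hstar tri hsub (by rw [h3])
  have h2c : ∀ v ∈ S, (G.induce (S \ {v})).Connected := h2conn.2
  have hx1X : x1 ∈ X := hsub (by simp [htri])
  have hx2X : x2 ∈ X := hsub (by simp [htri])
  have hx3X : x3 ∈ X := hsub (by simp [htri])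
  have hNY : N ⊆ Y := fun y hy => hy.1
  have hxy_ne : ∀ {x y}, x ∈ X → y ∈ Y → x ≠ y := by
    rintro x y hx hy rfl; exact (Set.disjoint_left.mp hdisj hx) hy
  -- adjacency from an X-vertex lands in Y
  have hadjY : ∀ {x v}, x ∈ X → G.Adj x v → v ∈ Y := by
    intro x v hx hadj
    rcases hbipadj hadj with ⟨_, hv⟩ | ⟨hx', _⟩
    · exact hv
    · exact absurd hx' (Set.disjoint_left.mp hdisj hx)
  have hadjX : ∀ {y v}, y ∈ Y → G.Adj y v → v ∈ X := by
    intro y v hy hadj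
    rcases hbipadj hadj with ⟨hy', _⟩ | ⟨_, hv⟩
    · exact absurd hy (Set.disjoint_left.mp hdisj hy')
    · exact hv
  -- members of S adjacent to a triple vertex are in N
  have hadjN : ∀ {x v}, x ∈ tri → v ∈ S → G.Adj x v → v ∈ N := by
    intro x v hx hv hadj
    have hvY : v ∈ Y := hadjY (hsub hx) hadj
    rcases hv with hv | hv
    · exact absurd (hsub hv) (Set.disjoint_left.mp hdisj · hvY)
    · exact hv
  -- every vertex of N is adjacent to at least two of x1, x2, x3
  have hcov : ∀ y ∈ N, (G.Adj x1 y ∧ G.Adj x2 y) ∨ (G.Adj x2 y ∧ G.Adj x3 y) ∨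
      (G.Adj x3 y ∧ G.Adj x1 y) := by
    intro y hy
    have h2 : 1 < (tri ∩ G.neighborSet y).ncard := hy.2
    obtain ⟨p, hp, q, hq, hpq⟩ := (Set.one_lt_ncard (Set.toFinite _)).mp h2
    have hpadj : G.Adj p y := hp.2.symm
    have hqadj : G.Adj q y := hq.2.symm
    have hp1 : p = x1 ∨ p = x2 ∨ p = x3 := hp.1
    have hq1 : q = x1 ∨ q = x2 ∨ q = x3 := hq.1
    rcases hp1 with rfl | rfl | rfl <;> rcases hq1 with rfl | rfl | rfl <;> tauto
  -- Claim B: every triple vertex has two distinct neighbors in N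
  have hB : ∀ v u w, v ∈ tri → u ∈ tri → w ∈ tri → v ≠ u → v ≠ w → u ≠ w →
      ∃ y1 ∈ N, ∃ y2 ∈ N, y1 ≠ y2 ∧ G.Adj v y1 ∧ G.Adj v y2 := by
    intro v u w hv hu hw hvu hvw huw
    have hvS : v ∈ S := Or.inl hv
    have huS : u ∈ S := Or.inl hu
    have hwS : w ∈ S := Or.inl hw
    obtain ⟨y1, hy1T, hy1adj⟩ := nbr_exists (h2c u huS)
      (Set.mem_diff_of_mem hvS (by simp [hvu])) (Set.mem_diff_of_mem hwS (by simp [huw.symm])) hvw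
    have hy1N : y1 ∈ N := hadjN hv hy1T.1 hy1adj
    obtain ⟨y2, hy2T, hy2adj⟩ := nbr_exists (h2c y1 (Or.inr hy1N))
      (Set.mem_diff_of_mem hvS (by simp [hxy_ne (hsub hv) (hNY hy1N)]))
      (Set.mem_diff_of_mem huS (by simp [hxy_ne (hsub hu) (hNY hy1N)])) hvu
    have hy2N : y2 ∈ N := hadjN hv hy2T.1 hy2adj
    exact ⟨y1, hy1N, y2, hy2N, fun h => hy2T.2 (Set.mem_singleton_iff.mpr h.symm),
      hy1adj, hy2adj⟩
  -- Claim A: every pair of triple vertices has a common neighbor in N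
  have hA : ∀ v w u, tri = {v, w, u} → v ≠ w → v ≠ u → w ≠ u →
      ∃ y ∈ N, G.Adj v y ∧ G.Adj w y := by
    intro v w u heq hvw hvu hwu
    by_contra hno
    push_neg at hno
    have hvtri : v ∈ tri := by rw [heq]; simp
    have hwtri : w ∈ tri := by rw [heq]; simp
    have hutri : u ∈ tri := by rw [heq]; simp
    have hvS : v ∈ S := Or.inl hvtri
    have hwS : w ∈ S := Or.inl hwtri
    set T : Set V := S \ {u} with hTdef
    have hc : (G.induce T).Connected := h2c u (Or.inl hutri)
    have hvT : v ∈ T := Set.mem_diff_of_mem hvS (by simp [hvu])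
    have hwT : w ∈ T := Set.mem_diff_of_mem hwS (by simp [hwu])
    have key : ∀ (p q : T), (G.induce T).Adj p q →
        (p.1 = v ∨ (p.1 ∈ N ∧ G.Adj v p.1)) → (q.1 = v ∨ (q.1 ∈ N ∧ G.Adj v q.1)) := by
      rintro ⟨p, hpT⟩ ⟨q, hqT⟩ hadj hp
      have hadj' : G.Adj p q := hadj
      rcases hp with rfl | ⟨hpN, hpadj⟩
      · exact Or.inr ⟨hadjN hvtri hqT.1 hadj', hadj'⟩
      · have hqX : q ∈ X := hadjX (hNY hpN) hadj'
        have hqtri : q ∈ tri := by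
          rcases hqT.1 with h | h
          · exact h
          · exact absurd hqX (Set.disjoint_left.mp hdisj · (hNY h))
        rw [heq] at hqtri
        rcases hqtri with rfl | rfl | rfl
        · exact Or.inl rfl
        · exact (hno p hpN hpadj hadj'.symm).elim
        · exact absurd (Set.mem_singleton _) hqT.2
    have hreach : (G.induce T).Reachable ⟨v, hvT⟩ ⟨w, hwT⟩ := hc.preconnected _ _
    have := reach_closed (fun z : T => z.1 = v ∨ (z.1 ∈ N ∧ G.Adj v z.1))
      (fun p q h hp => key p q h hp) hreach (Or.inl rfl)
    rcases this with h | ⟨hwN, _⟩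
    · exact hvw h.symm
    · exact hxy_ne (hsub hwtri) (hNY hwN) rfl
  -- the three pair-neighborhoods
  set A : Set V := {y ∈ N | G.Adj x1 y ∧ G.Adj x2 y} with hAdef
  set B : Set V := {y ∈ N | G.Adj x2 y ∧ G.Adj x3 y} with hBdef
  set C : Set V := {y ∈ N | G.Adj x3 y ∧ G.Adj x1 y} with hCdef
  have hAne : A.Nonempty := by
    obtain ⟨y, hyN, h1, h2⟩ := hA x1 x2 x3 rfl d12 d13 d23
    exact ⟨y, hyN, h1, h2⟩
  have hBne : B.Nonempty := by
    obtain ⟨y, hyN, h1, h2⟩ := hA x2 x3 x1 (by ext z; simp [htri]; tauto) d23 d12.symm d13.symm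
    exact ⟨y, hyN, h1, h2⟩
  have hCne : C.Nonempty := by
    obtain ⟨y, hyN, h1, h2⟩ := hA x3 x1 x2 (by ext z; simp [htri]; tauto) d13.symm d23.symm d12
    exact ⟨y, hyN, h1, h2⟩
  have memtri : ∀ z ∈ ({x1, x2, x3} : Set V), z ∈ tri := fun z hz => hz
  -- union bounds
  have hABle : 2 ≤ (A ∪ B).ncard := by
    obtain ⟨y1, hy1, y2, hy2, hne, hadj1, hadj2⟩ :=
      hB x2 x1 x3 (by simp [htri]) (by simp [htri]) (by simp [htri]) d12.symm d23 d13
    have hmem : ∀ y, y ∈ N → G.Adj x2 y → y ∈ A ∪ B := by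
      intro y hyN hadj
      rcases hcov y hyN with ⟨h1, h2⟩ | ⟨h1, h2⟩ | ⟨h1, h2⟩
      · exact Or.inl ⟨hyN, h1, h2⟩
      · exact Or.inr ⟨hyN, h1, h2⟩
      · exact Or.inl ⟨hyN, h2, hadj⟩
    exact (Set.one_lt_ncard (Set.toFinite _)).mpr
      ⟨y1, hmem y1 hy1 hadj1, y2, hmem y2 hy2 hadj2, hne⟩
  have hBCle : 2 ≤ (B ∪ C).ncard := by
    obtain ⟨y1, hy1, y2, hy2, hne, hadj1, hadj2⟩ :=
      hB x3 x1 x2 (by simp [htri]) (by simp [htri]) (by simp [htri]) d13.symm d23.symm d12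
    have hmem : ∀ y, y ∈ N → G.Adj x3 y → y ∈ B ∪ C := by
      intro y hyN hadj
      rcases hcov y hyN with ⟨h1, h2⟩ | ⟨h1, h2⟩ | ⟨h1, h2⟩
      · exact Or.inl ⟨hyN, h2, hadj⟩
      · exact Or.inl ⟨hyN, h1, h2⟩
      · exact Or.inr ⟨hyN, h1, h2⟩
    exact (Set.one_lt_ncard (Set.toFinite _)).mpr
      ⟨y1, hmem y1 hy1 hadj1, y2, hmem y2 hy2 hadj2, hne⟩
  have hCAle : 2 ≤ (C ∪ A).ncard := by
    obtain ⟨y1, hy1, y2, hy2, hne, hadj1, hadj2⟩ :=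
      hB x1 x2 x3 (by simp [htri]) (by simp [htri]) (by simp [htri]) d12 d13 d23
    have hmem : ∀ y, y ∈ N → G.Adj x1 y → y ∈ C ∪ A := by
      intro y hyN hadj
      rcases hcov y hyN with ⟨h1, h2⟩ | ⟨h1, h2⟩ | ⟨h1, h2⟩
      · exact Or.inr ⟨hyN, h1, h2⟩
      · exact Or.inl ⟨hyN, h2, hadj⟩
      · exact Or.inl ⟨hyN, h1, h2⟩
    exact (Set.one_lt_ncard (Set.toFinite _)).mpr
      ⟨y1, hmem y1 hy1 hadj1, y2, hmem y2 hy2 hadj2, hne⟩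
  have hABCle : 3 ≤ (A ∪ B ∪ C).ncard := by
    have hNsub : N ⊆ A ∪ B ∪ C := by
      intro y hyN
      rcases hcov y hyN with ⟨h1, h2⟩ | ⟨h1, h2⟩ | ⟨h1, h2⟩
      · exact Or.inl (Or.inl ⟨hyN, h1, h2⟩)
      · exact Or.inl (Or.inr ⟨hyN, h1, h2⟩)
      · exact Or.inr ⟨hyN, h1, h2⟩
    calc 3 = tri.ncard := h3.symm
      _ ≤ N.ncard := hcard
      _ ≤ (A ∪ B ∪ C).ncard := Set.ncard_le_ncard hNsub (Set.toFinite _)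
  -- apply the SDR lemma to the finsets
  have hAfin := Set.toFinite A
  have hBfin := Set.toFinite B
  have hCfin := Set.toFinite C
  obtain ⟨a, ha, b, hb, c, hc, dab, dbc, dac⟩ :=
    sdr3 hAfin.toFinset hBfin.toFinset hCfin.toFinset
      (hAfin.toFinset_nonempty.mpr hAne) (hBfin.toFinset_nonempty.mpr hBne)
      (hCfin.toFinset_nonempty.mpr hCne)
      (by rw [← ncard_union_toFinset hAfin hBfin]; exact hABle)
      (by rw [← ncard_union_toFinset hBfin hCfin]; exact hBCle)
      (by rw [← ncard_union_toFinset hCfin hAfin]; exact hCAle)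
      (by rw [← Set.Finite.toFinset_union hAfin hBfin (hAfin.union hBfin),
            ← ncard_union_toFinset (hAfin.union hBfin) hCfin]; exact hABCle)
  rw [Set.Finite.mem_toFinset] at ha hb hc
  obtain ⟨haN, ha1, ha2⟩ := ha
  obtain ⟨hbN, hb2, hb3⟩ := hb
  obtain ⟨hcN, hc3, hc1⟩ := hc
  have haY := hNY haN
  have hbY := hNY hbN
  have hcY := hNY hcN
  obtain ⟨w, hwcyc, hwsupp⟩ := six_cycle dab dbc dac d12 d13 d23
    (hxy_ne hx1X haY) (hxy_ne hx1X hbY) (hxy_ne hx1X hcY)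
    (hxy_ne hx2X haY) (hxy_ne hx2X hbY) (hxy_ne hx2X hcY)
    (hxy_ne hx3X haY) (hxy_ne hx3X hbY) (hxy_ne hx3X hcY)
    ha1 ha2.symm hb2 hb3.symm hc3 hc1.symm
  refine ⟨x1, w, hwcyc, fun u _ => Set.mem_univ u, ?_⟩
  rw [hwsupp]
  ext u
  simp only [Set.mem_inter_iff, Set.mem_insert_iff, Set.mem_singleton_iff, htri]
  constructor
  · rintro ⟨(rfl | rfl | rfl | rfl | rfl | rfl), huX⟩
    · tauto
    · exact absurd huX (Set.disjoint_left.mp hdisj · haY)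
    · tauto
    · exact absurd huX (Set.disjoint_left.mp hdisj · hbY)
    · tauto
    · exact absurd huX (Set.disjoint_left.mp hdisj · hcY)
  · rintro (rfl | rfl | rfl)
    · exact ⟨by tauto, hx1X⟩
    · exact ⟨by tauto, hx2X⟩
    · exact ⟨by tauto, hx3X⟩
end

section
/- If G is a saturated critical bipartite graph with parts X and Y, then no vertex y ∈ Y has degree exactly |X| − 1. -/
open SimpleGraph Set

section Aux

variable {V : Type*} {G : SimpleGraph V}

lemma exists_walk_of_chain :
    ∀ (l : List V) (a b : V), List.Chain G.Adj a (l ++ [b]) →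
      ∃ w : G.Walk a b, w.support = a :: (l ++ [b])
  | [], a, b, h => by
      rw [List.nil_append] at h
      unfold List.Chain at h
      rw [List.isChain_cons_cons] at h
      exact ⟨Walk.cons h.1 Walk.nil, by simp⟩
  | c :: l, a, b, h => by
      rw [List.cons_append] at h
      unfold List.Chain at h
      rw [List.isChain_cons_cons] at h
      obtain ⟨w, hw⟩ := exists_walk_of_chain l c b h.2
      exact ⟨Walk.cons h.1 w, by simp [hw]⟩

lemma eq_cons_of_edge_head {a c t : V} (w : G.Walk a c)
    (hn : w.support.Nodup) (he : s(t, a) ∈ w.edges) :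
    ∃ (h : G.Adj a t) (r : G.Walk t c), w = Walk.cons h r := by
  cases w with
  | nil => simp at he
  | @cons _ v _ h' r' =>
    rw [Walk.edges_cons, List.mem_cons] at he
    rcases he with he | he
    · rw [Sym2.eq_iff] at he
      rcases he with ⟨rfl, rfl⟩ | ⟨rfl, -⟩
      · exact absurd rfl h'.ne
      · exact ⟨h', r', rfl⟩
    · exfalso
      have hmem := r'.snd_mem_support_of_mem_edges he
      rw [Walk.support_cons] at hn
      exact (List.nodup_cons.mp hn).1 hmem

lemma exists_cycle_of_list {a b : V} {M : List V}
    (hC : List.Chain G.Adj a (M ++ [b])) (hnd : (a :: (M ++ [b])).Nodup)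
    (hba : G.Adj b a) (hM : M ≠ []) :
    ∃ w : G.Walk b b, w.IsCycle ∧ ∀ u ∈ a :: (M ++ [b]), u ∈ w.support := by
  obtain ⟨w₀, hw₀⟩ := exists_walk_of_chain M a b hC
  have hnd' : w₀.support.Nodup := by rw [hw₀]; exact hnd
  refine ⟨Walk.cons hba w₀, ?_, ?_⟩
  · rw [Walk.cons_isCycle_iff]
    refine ⟨Walk.IsPath.mk' hnd', fun he => ?_⟩
    obtain ⟨h, r, hr⟩ := eq_cons_of_edge_head w₀ hnd' he
    have hsup : a :: (M ++ [b]) = a :: r.support := by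
      rw [← hw₀, hr, Walk.support_cons]
    have hMb : M ++ [b] = b :: r.support.tail := by
      injection hsup with _ h2
      exact h2.trans r.support_eq_cons
    have hbM : b ∈ M := by
      cases M with
      | nil => exact absurd rfl hM
      | cons m M' =>
        rw [List.cons_append] at hMb
        injection hMb with h1 _
        rw [h1]; exact List.mem_cons_self
    have := List.nodup_cons.mp hnd
    have h2 := this.2
    rw [List.nodup_append] at h2
    exact h2.2.2 b hbM b (List.mem_singleton.mpr rfl) rfl
  · intro u hu
    rw [Walk.support_cons, hw₀]
    exact List.mem_cons_of_mem _ hu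

lemma chain'_rev {l : List V} (h : List.Chain' G.Adj l) : List.Chain' G.Adj l.reverse := by
  unfold List.Chain' at h ⊢
  rw [List.isChain_reverse]
  exact h.imp fun a b hab => hab.symm

/-- Assemble the surgery cycle `x₀ :: sm ++ [w] ++ [y₀] ++ (hd::tl).reverse ++ [y]` into
an honest cycle of `G`. -/
lemma build_cycle {x₀ y₀ y w hd : V} {sm tl : List V}
    (hc_s : List.Chain' G.Adj (x₀ :: (sm ++ [w])))
    (hc_seg : List.Chain' G.Adj (hd :: tl))
    (hwy₀ : G.Adj w y₀)
    (hy₀e : ∀ e, (hd :: tl).getLast? = some e → G.Adj y₀ e)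
    (hhdy : G.Adj hd y)
    (hyx₀ : G.Adj y x₀)
    (hnd : ((x₀ :: (sm ++ [w])) ++ ([y₀] ++ ((hd :: tl).reverse ++ [y]))).Nodup) :
    ∃ c : G.Walk y y, c.IsCycle ∧
      ∀ u ∈ (x₀ :: (sm ++ [w])) ++ ([y₀] ++ ((hd :: tl).reverse ++ [y])), u ∈ c.support := by
  obtain ⟨sg, e, hsg⟩ := (List.eq_nil_or_concat (hd :: tl)).resolve_left (by simp)
  rw [List.concat_eq_append] at hsg
  have hrev : (hd :: tl).reverse = e :: sg.reverse := by rw [hsg]; simp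
  have he : G.Adj y₀ e := hy₀e e (by rw [hsg]; exact List.getLast?_concat)
  have hchainC : List.Chain' G.Adj
      ((x₀ :: (sm ++ [w])) ++ ([y₀] ++ ((hd :: tl).reverse ++ [y]))) := by
    unfold List.Chain'
    rw [List.isChain_append]
    refine ⟨hc_s, ?_, ?_⟩
    · rw [List.singleton_append, List.isChain_cons]
      constructor
      · intro z hz
        rw [hrev, List.cons_append, List.head?_cons] at hz
        rw [Option.mem_def, Option.some.injEq] at hz
        rw [← hz]
        exact he
      · rw [List.isChain_append]
        refine ⟨chain'_rev hc_seg, List.isChain_singleton _, ?_⟩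
        intro z hz b hb
        rw [List.getLast?_reverse, List.head?_cons, Option.mem_def, Option.some.injEq] at hz
        rw [List.head?_cons, Option.mem_def, Option.some.injEq] at hb
        rw [← hz, ← hb]
        exact hhdy
    · intro z hz b hb
      have : (x₀ :: (sm ++ [w])) = (x₀ :: sm) ++ [w] := by simp
      rw [this, List.getLast?_concat, Option.mem_def, Option.some.injEq] at hz
      rw [List.singleton_append, List.head?_cons, Option.mem_def, Option.some.injEq] at hb
      rw [← hz, ← hb]
      exact hwy₀
  have hshape : (x₀ :: (sm ++ [w])) ++ ([y₀] ++ ((hd :: tl).reverse ++ [y]))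
      = x₀ :: (((sm ++ [w]) ++ ([y₀] ++ (hd :: tl).reverse)) ++ [y]) := by
    simp
  rw [hshape] at hchainC hnd
  have hchain2 : List.Chain G.Adj x₀ ((((sm ++ [w]) ++ ([y₀] ++ (hd :: tl).reverse))) ++ [y]) :=
    hchainC
  obtain ⟨c, hc, hmem⟩ := exists_cycle_of_list hchain2 hnd hyx₀ (by simp)
  refine ⟨c, hc, ?_⟩
  intro u hu
  apply hmem
  rw [hshape] at hu
  exact hu

lemma construction {X Y : Set V}
    (hbipE : ∀ ⦃u v⦄, G.Adj u v → (u ∈ X ∧ v ∈ Y) ∨ (u ∈ Y ∧ v ∈ X))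
    (hdisj : Disjoint X Y)
    {x₀ y₀ : V} (hx₀ : x₀ ∈ X) (hy₀ : y₀ ∈ Y)
    (huniv : ∀ x ∈ X, x ≠ x₀ → G.Adj y₀ x)
    (hnadj : ¬ G.Adj x₀ y₀)
    {y₁ x₁ : V} {T : List V}
    (hchain : List.Chain' G.Adj (x₀ :: y₁ :: x₁ :: T))
    (hnodup : (x₀ :: y₁ :: x₁ :: T).Nodup)
    (hlast : (x₀ :: y₁ :: x₁ :: T).getLast? = some y₀)
    (hXL : ∀ x ∈ X, x ∈ x₀ :: y₁ :: x₁ :: T)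
    {y : V} (hyx₀ : G.Adj x₀ y) (hyy₁ : y ≠ y₁) :
    (∃ c : G.Walk y y, c.IsCycle ∧ ∀ x ∈ X, x ∈ c.support) ∨
      (y ∉ (x₀ :: y₁ :: x₁ :: T) ∧ ∀ v, G.Adj y v → v = x₀ ∨ v = x₁) := by
  classical
  have sideY : ∀ {u v : V}, G.Adj u v → u ∈ X → v ∈ Y := by
    intro u v h hu
    rcases hbipE h with ⟨-, hv⟩ | ⟨huY, -⟩
    · exact hv
    · exact absurd huY (Set.disjoint_left.mp hdisj hu)
  have sideX : ∀ {u v : V}, G.Adj u v → u ∈ Y → v ∈ X := by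
    intro u v h hu
    rcases hbipE h with ⟨huX, -⟩ | ⟨-, hv⟩
    · exact absurd hu (Set.disjoint_left.mp hdisj huX)
    · exact hv
  have sideX₂ : ∀ {u v : V}, G.Adj u v → v ∈ Y → u ∈ X := fun h hv => sideX h.symm hv
  have sideY₂ : ∀ {u v : V}, G.Adj u v → v ∈ X → u ∈ Y := fun h hv => sideY h.symm hv
  obtain ⟨hadj01, hchain1⟩ := List.isChain_cons_cons.mp hchain
  obtain ⟨hadj12, hchain2⟩ := List.isChain_cons_cons.mp hchain1
  have hy₁Y : y₁ ∈ Y := sideY hadj01 hx₀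
  have hx₁X : x₁ ∈ X := sideX hadj12 hy₁Y
  have hyY : y ∈ Y := sideY hyx₀ hx₀
  have hne_xy : ∀ {u v : V}, u ∈ X → v ∈ Y → u ≠ v := fun hu hv h =>
    (Set.disjoint_left.mp hdisj hu) (h ▸ hv)
  have hyy₀ : y ≠ y₀ := fun h => hnadj (h ▸ hyx₀)
  by_cases hyL : y ∈ x₀ :: y₁ :: x₁ :: T
  · left
    have hyT : y ∈ T := by
      simp only [List.mem_cons] at hyL
      rcases hyL with rfl | rfl | rfl | h
      · exact absurd rfl (hne_xy hx₀ hyY).symm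
      · exact absurd rfl hyy₁
      · exact absurd rfl (hne_xy hx₁X hyY).symm
      · exact h
    obtain ⟨t₁, t₂, rfl⟩ := List.append_of_mem hyT
    have ht₂ : t₂ ≠ [] := by
      rintro rfl
      rw [show x₀ :: y₁ :: x₁ :: (t₁ ++ y :: ([] : List V)) = (x₀ :: y₁ :: x₁ :: t₁) ++ [y]
          by simp, List.getLast?_concat] at hlast
      exact hyy₀ (Option.some.inj hlast)
    obtain ⟨t₂', z, hz⟩ := (List.eq_nil_or_concat t₂).resolve_left ht₂
    rw [List.concat_eq_append] at hz
    have hzy₀ : z = y₀ := by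
      have hl2 := hlast
      rw [hz, show x₀ :: y₁ :: x₁ :: (t₁ ++ y :: (t₂' ++ [z]))
          = (x₀ :: y₁ :: x₁ :: (t₁ ++ y :: t₂')) ++ [z] by simp,
        List.getLast?_concat] at hl2
      exact Option.some.inj hl2
    rw [hzy₀] at hz
    subst hz
    obtain ⟨m, w, hm⟩ := (List.eq_nil_or_concat (x₁ :: t₁)).resolve_left (by simp)
    rw [List.concat_eq_append] at hm
    have hL : x₀ :: y₁ :: x₁ :: (t₁ ++ y :: (t₂' ++ [y₀]))
        = (x₀ :: ((y₁ :: m) ++ [w])) ++ ([y] ++ (t₂' ++ [y₀])) := by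
      have h1 : x₀ :: y₁ :: x₁ :: (t₁ ++ y :: (t₂' ++ [y₀]))
          = x₀ :: y₁ :: ((x₁ :: t₁) ++ (y :: (t₂' ++ [y₀]))) := by simp
      rw [h1, hm]; simp
    rw [hL] at hchain hnodup hXL
    obtain ⟨hc_s, hc_rest, hjn1⟩ := List.isChain_append.mp hchain
    obtain ⟨-, hc_t, hjn2⟩ := List.isChain_append.mp hc_rest
    obtain ⟨hc_t₂', -, hjn3⟩ := List.isChain_append.mp hc_t
    have hwy : G.Adj w y := by
      refine hjn1 w ?_ y (by simp)
      rw [show x₀ :: ((y₁ :: m) ++ [w]) = (x₀ :: y₁ :: m) ++ [w] by simp, List.getLast?_concat]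
      rfl
    have hwX : w ∈ X := sideX₂ hwy hyY
    have hwx₀ : w ≠ x₀ := by
      intro h
      have h1 := hnodup
      rw [List.cons_append, List.nodup_cons] at h1
      exact h1.1 (by rw [← h]; simp)
    cases t₂' with
    | nil =>
      exfalso
      have : G.Adj y y₀ := hjn2 y (by simp) y₀ (by simp)
      exact Set.disjoint_left.mp hdisj (sideX this hyY) hy₀
    | cons hd tl =>
      have hhdy : G.Adj hd y := (hjn2 y (by simp) hd (by simp)).symm
      have hperm : ((x₀ :: ((y₁ :: m) ++ [w])) ++ ([y₀] ++ ((hd :: tl).reverse ++ [y]))).Perm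
          ((x₀ :: ((y₁ :: m) ++ [w])) ++ ([y] ++ ((hd :: tl) ++ [y₀]))) := by
        refine List.perm_iff_count.mpr fun a => ?_
        simp only [List.count_append, List.count_cons, List.count_reverse, List.count_nil]
        omega
      have hndC := hperm.nodup_iff.mpr hnodup
      obtain ⟨c, hc, hmem⟩ := build_cycle hc_s hc_t₂' (huniv w hwX hwx₀).symm
        (fun e he => (hjn3 e (Option.mem_def.mpr he) y₀ (by simp)).symm) hhdy hyx₀.symm hndC
      exact ⟨c, hc, fun x hx => hmem x (hperm.mem_iff.mpr (hXL x hx))⟩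
  · by_cases hex : ∃ x, x ∈ X ∧ G.Adj y x ∧ x ≠ x₀ ∧ x ≠ x₁
    · left
      obtain ⟨x, hxX, hyx, hxx₀, hxx₁⟩ := hex
      have hxT : x ∈ T := by
        have hmem := hXL x hxX
        simp only [List.mem_cons] at hmem
        rcases hmem with rfl | rfl | rfl | h
        · exact absurd rfl hxx₀
        · exact absurd rfl (hne_xy hxX hy₁Y).symm.symm
        · exact absurd rfl hxx₁
        · exact h
      obtain ⟨t₁, t₂, rfl⟩ := List.append_of_mem hxT
      have hxy₀ : x ≠ y₀ := hne_xy hxX hy₀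
      have ht₂ : t₂ ≠ [] := by
        rintro rfl
        rw [show x₀ :: y₁ :: x₁ :: (t₁ ++ x :: ([] : List V)) = (x₀ :: y₁ :: x₁ :: t₁) ++ [x]
            by simp, List.getLast?_concat] at hlast
        exact hxy₀ (Option.some.inj hlast)
      obtain ⟨t₂'', z, hz⟩ := (List.eq_nil_or_concat t₂).resolve_left ht₂
      rw [List.concat_eq_append] at hz
      have hzy₀ : z = y₀ := by
        have hl2 := hlast
        rw [hz, show x₀ :: y₁ :: x₁ :: (t₁ ++ x :: (t₂'' ++ [z]))
            = (x₀ :: y₁ :: x₁ :: (t₁ ++ x :: t₂'')) ++ [z] by simp,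
          List.getLast?_concat] at hl2
        exact Option.some.inj hl2
      rw [hzy₀] at hz
      subst hz
      obtain ⟨m, yj, hm⟩ := (List.eq_nil_or_concat (x₁ :: t₁)).resolve_left (by simp)
      rw [List.concat_eq_append] at hm
      obtain ⟨m₂, w₂, hm₂⟩ := (List.eq_nil_or_concat (y₁ :: m)).resolve_left (by simp)
      rw [List.concat_eq_append] at hm₂
      have hL : x₀ :: y₁ :: x₁ :: (t₁ ++ x :: (t₂'' ++ [y₀]))
          = (x₀ :: (m₂ ++ [w₂])) ++ ([yj] ++ ((x :: t₂'') ++ [y₀])) := by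
        have h1 : x₀ :: y₁ :: x₁ :: (t₁ ++ x :: (t₂'' ++ [y₀]))
            = x₀ :: y₁ :: ((x₁ :: t₁) ++ (x :: (t₂'' ++ [y₀]))) := by simp
        rw [h1, hm]
        have h2 : x₀ :: y₁ :: ((m ++ [yj]) ++ (x :: (t₂'' ++ [y₀])))
            = x₀ :: ((y₁ :: m) ++ ([yj] ++ (x :: (t₂'' ++ [y₀])))) := by simp
        rw [h2, hm₂]; simp
      rw [hL] at hchain hnodup hXL hyL
      obtain ⟨hc_s, hc_rest, hjn1⟩ := List.isChain_append.mp hchain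
      obtain ⟨-, hc_t, hjn2⟩ := List.isChain_append.mp hc_rest
      obtain ⟨hc_seg, -, hjn3⟩ := List.isChain_append.mp hc_t
      have hyjx : G.Adj yj x := hjn2 yj (by simp) x (by simp)
      have hyjY : yj ∈ Y := sideY₂ hyjx hxX
      have hw₂yj : G.Adj w₂ yj := by
        refine hjn1 w₂ ?_ yj (by simp)
        rw [show x₀ :: (m₂ ++ [w₂]) = (x₀ :: m₂) ++ [w₂] by simp, List.getLast?_concat]
        rfl
      have hw₂X : w₂ ∈ X := sideX₂ hw₂yj hyjY
      have hw₂x₀ : w₂ ≠ x₀ := by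
        intro h
        have h1 := hnodup
        rw [List.cons_append, List.nodup_cons] at h1
        exact h1.1 (by rw [← h]; simp)
      have hsub : ((x₀ :: (m₂ ++ [w₂])) ++ ((x :: t₂'') ++ [y₀])).Sublist
          ((x₀ :: (m₂ ++ [w₂])) ++ ([yj] ++ ((x :: t₂'') ++ [y₀]))) :=
        (List.sublist_cons_self yj _).append_left _
      have hndsub : ((x₀ :: (m₂ ++ [w₂])) ++ ((x :: t₂'') ++ [y₀])).Nodup :=
        List.Nodup.sublist hsub hnodup
      have hyn : y ∉ (x₀ :: (m₂ ++ [w₂])) ++ ((x :: t₂'') ++ [y₀]) := fun h =>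
        hyL (hsub.subset h)
      have hnd' : (((x₀ :: (m₂ ++ [w₂])) ++ ((x :: t₂'') ++ [y₀])) ++ [y]).Nodup :=
        hndsub.append (List.nodup_singleton _) (by
          intro a ha hb
          rw [List.mem_singleton] at hb
          subst hb
          exact hyn ha)
      have hperm : ((x₀ :: (m₂ ++ [w₂])) ++ ([y₀] ++ ((x :: t₂'').reverse ++ [y]))).Perm
          (((x₀ :: (m₂ ++ [w₂])) ++ ((x :: t₂'') ++ [y₀])) ++ [y]) := by
        refine List.perm_iff_count.mpr fun a => ?_
        simp only [List.count_append, List.count_cons, List.count_reverse, List.count_nil]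
        omega
      have hndC := hperm.nodup_iff.mpr hnd'
      obtain ⟨c, hc, hmem⟩ := build_cycle hc_s hc_seg (huniv w₂ hw₂X hw₂x₀).symm
        (fun e he => (hjn3 e (Option.mem_def.mpr he) y₀ (by simp)).symm) hyx.symm hyx₀.symm hndC
      refine ⟨c, hc, fun x' hx' => hmem x' (hperm.mem_iff.mpr ?_)⟩
      have hx'yj : x' ≠ yj := hne_xy hx' hyjY
      have hmem2 := hXL x' hx'
      rw [List.mem_append] at hmem2
      rw [List.mem_append, List.mem_append]
      rcases hmem2 with h | h
      · exact Or.inl (Or.inl h)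
      · rw [List.mem_append, List.mem_singleton] at h
        rcases h with h | h
        · exact absurd h hx'yj
        · exact Or.inl (Or.inr h)
    · right
      refine ⟨hyL, fun v hv => ?_⟩
      have hvX : v ∈ X := sideX hv hyY
      by_contra hcon
      push_neg at hcon
      exact hex ⟨v, hvX, hv, hcon.1, hcon.2⟩
lemma not_connected_of_closed {z x t : V} {K : Set V}
    (hx : x ∈ K) (ht : t ∉ K) (htz : t ≠ z) (hxz : x ≠ z)
    (hcl : ∀ u ∈ K, ∀ v, G.Adj u v → v ≠ z → v ∈ K)
    (hc : (G.induce ((Set.univ : Set V) \ {z})).Connected) : False := by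
  have hxm : x ∈ (Set.univ : Set V) \ {z} := by simp [hxz]
  have htm : t ∈ (Set.univ : Set V) \ {z} := by simp [htz]
  obtain ⟨w⟩ := hc.preconnected ⟨x, hxm⟩ ⟨t, htm⟩
  have key : ∀ (a b : ((Set.univ : Set V) \ {z} : Set V))
      (_ : (G.induce ((Set.univ : Set V) \ {z})).Walk a b), a.1 ∈ K → b.1 ∈ K := by
    intro a b w
    induction w with
    | nil => exact fun h => h
    | @cons a' b' _ h p ih =>
      intro ha
      apply ih
      have hadj : G.Adj a'.1 b'.1 := h
      have hbz : b'.1 ≠ z := by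
        have := b'.2
        simp only [Set.mem_diff, Set.mem_singleton_iff] at this
        exact this.2
      exact hcl _ ha _ hadj hbz
  exact ht (key _ _ w hx)

lemma extract_path {G' : SimpleGraph V} {x₀ y₀ : V} (c : G'.Walk y₀ y₀) (hc : c.IsCycle)
    (he : s(x₀, y₀) ∈ c.edges) :
    ∃ q : G'.Walk x₀ y₀, q.IsPath ∧ s(x₀, y₀) ∉ q.edges ∧ ∀ u ∈ c.support, u ∈ q.support := by
  rw [Walk.isCycle_def] at hc
  obtain ⟨htrail, hne, hnd⟩ := hc
  cases c with
  | nil => simp at he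
  | @cons _ u _ h p =>
    rw [Walk.support_cons, List.tail_cons] at hnd
    have hedges : (s(y₀, u) :: p.edges).Nodup := by
      have := htrail.edges_nodup
      rwa [Walk.edges_cons] at this
    rw [Walk.edges_cons, List.mem_cons] at he
    rcases he with he | he
    · rw [Sym2.eq_iff] at he
      rcases he with ⟨rfl, rfl⟩ | ⟨rfl, -⟩
      · exact absurd rfl h.ne
      · refine ⟨p, Walk.IsPath.mk' hnd, ?_, ?_⟩
        · intro hmem
          have := (List.nodup_cons.mp hedges).1
          rw [Sym2.eq_swap] at hmem
          exact this hmem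
        · intro v hv
          rw [Walk.support_cons, List.mem_cons] at hv
          rcases hv with rfl | hv
          · exact p.end_mem_support
          · exact hv
    · have hrevnd : p.reverse.support.Nodup := by
        rw [Walk.support_reverse]
        exact List.nodup_reverse.mpr hnd
      have herev : s(x₀, y₀) ∈ p.reverse.edges := by
        rw [Walk.edges_reverse, List.mem_reverse]
        exact he
      obtain ⟨hadj, r, hr⟩ := eq_cons_of_edge_head p.reverse hrevnd herev
      have hry : p.reverse.support = y₀ :: r.support := by rw [hr, Walk.support_cons]
      have hrnd : r.support.Nodup ∧ y₀ ∉ r.support := by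
        rw [hry] at hrevnd
        exact ⟨(List.nodup_cons.mp hrevnd).2, (List.nodup_cons.mp hrevnd).1⟩
      refine ⟨r.append (Walk.cons h.symm Walk.nil), ?_, ?_, ?_⟩
      · apply Walk.IsPath.mk'
        rw [Walk.support_append, Walk.support_cons, Walk.support_nil, List.tail_cons]
        rw [List.nodup_append]
        refine ⟨hrnd.1, List.nodup_singleton _, ?_⟩
        intro a ha b hb
        rw [List.mem_singleton] at hb
        rw [hb]
        exact fun h => hrnd.2 (h ▸ ha)
      · rw [Walk.edges_append, Walk.edges_cons, Walk.edges_nil, List.mem_append]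
        rintro (hmem | hmem)
        · have : p.reverse.edges = s(y₀, x₀) :: r.edges := by rw [hr, Walk.edges_cons]
          have hnd2 : p.reverse.edges.Nodup := by
            rw [Walk.edges_reverse]
            exact List.nodup_reverse.mpr (List.nodup_cons.mp hedges).2
          rw [this, List.nodup_cons] at hnd2
          rw [Sym2.eq_swap] at hmem
          exact hnd2.1 hmem
        · rw [List.mem_singleton, Sym2.eq_iff] at hmem
          rcases hmem with ⟨rfl, -⟩ | ⟨h1, h2⟩
          · -- u = x₀ : first edge equals s(x₀,y₀) ∈ p.edges, contradict trail nodup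
            refine (List.nodup_cons.mp hedges).1 ?_
            rw [Sym2.eq_swap]
            exact he
          · subst h1; subst h2; exact absurd rfl hadj.ne
      · intro v hv
        have hvset : v ∈ y₀ :: r.support := by
          rw [Walk.support_cons, List.mem_cons] at hv
          rcases hv with rfl | hv
          · exact List.mem_cons_self
          · rw [← hry, Walk.support_reverse, List.mem_reverse]
            exact hv
        rw [Walk.support_append, Walk.support_cons, Walk.support_nil, List.tail_cons,
          List.mem_append, List.mem_singleton]
        rcases List.mem_cons.mp hvset with rfl | hv'
        · exact Or.inr rfl
        · exact Or.inl hv'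

lemma start_mem_support_tail {v : V} (c : G.Walk v v) (h : c ≠ Walk.nil) :
    v ∈ c.support.tail := by
  cases c with
  | nil => exact absurd rfl h
  | cons h' p => rw [Walk.support_cons, List.tail_cons]; exact p.end_mem_support

lemma main_spanning [Finite V] {X Y : Set V}
    (hbipE : ∀ ⦃u v⦄, G.Adj u v → (u ∈ X ∧ v ∈ Y) ∨ (u ∈ Y ∧ v ∈ X))
    (hdisj : Disjoint X Y)
    {x₀ y₀ : V} (hx₀ : x₀ ∈ X) (hy₀ : y₀ ∈ Y)
    (huniv : ∀ x ∈ X, x ≠ x₀ → G.Adj y₀ x)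
    (hnadj : ¬ G.Adj x₀ y₀)
    (hY2 : ∀ y ∈ Y, 2 ≤ (X ∩ G.neighborSet y).ncard)
    (h2conn : ∀ v : V, (G.induce ((Set.univ : Set V) \ {v})).Connected)
    (hX3 : 3 ≤ X.ncard)
    (q : G.Walk x₀ y₀) (hq : q.IsPath) (hXq : ∀ x ∈ X, x ∈ q.support) :
    ∃ (v : V) (c : G.Walk v v), c.IsCycle ∧ ∀ x ∈ X, x ∈ c.support := by
  classical
  have sideY : ∀ {u v : V}, G.Adj u v → u ∈ X → v ∈ Y := by
    intro u v h hu
    rcases hbipE h with ⟨-, hv⟩ | ⟨huY, -⟩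
    · exact hv
    · exact absurd huY (Set.disjoint_left.mp hdisj hu)
  have sideX : ∀ {u v : V}, G.Adj u v → u ∈ Y → v ∈ X := by
    intro u v h hu
    rcases hbipE h with ⟨huX, -⟩ | ⟨-, hv⟩
    · exact absurd hu (Set.disjoint_left.mp hdisj huX)
    · exact hv
  have hne_xy : ∀ {u v : V}, u ∈ X → v ∈ Y → u ≠ v := fun hu hv h =>
    (Set.disjoint_left.mp hdisj hu) (h ▸ hv)
  obtain ⟨L, hL⟩ : ∃ L, q.support = x₀ :: L := ⟨q.support.tail, q.support_eq_cons⟩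
  rcases L with _ | ⟨y₁, _ | ⟨x₁, T⟩⟩
  · exfalso
    have hsub : X ⊆ {x₀} := by
      intro x hx
      have := hXq x hx
      rw [hL] at this
      simpa using this
    have := Set.ncard_le_ncard hsub (Set.toFinite _)
    rw [Set.ncard_singleton] at this
    omega
  · exfalso
    have hsub : X ⊆ {x₀, y₁} := by
      intro x hx
      have := hXq x hx
      rw [hL] at this
      simpa using this
    have h1 := Set.ncard_le_ncard hsub (Set.toFinite _)
    have h2 : ({x₀, y₁} : Set V).ncard ≤ 2 := by
      have := Set.ncard_insert_le x₀ ({y₁} : Set V)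
      rw [Set.ncard_singleton] at this
      omega
    omega
  · have hchain : List.Chain' G.Adj (x₀ :: y₁ :: x₁ :: T) := by
      rw [← hL]; exact q.isChain_adj_support
    have hnodup : (x₀ :: y₁ :: x₁ :: T).Nodup := by
      rw [← hL]; exact hq.support_nodup
    have hlast : (x₀ :: y₁ :: x₁ :: T).getLast? = some y₀ := by
      rw [← hL, List.getLast?_eq_getLast q.support_ne_nil, q.getLast_support]
    have hXL : ∀ x ∈ X, x ∈ x₀ :: y₁ :: x₁ :: T := by
      intro x hx
      have := hXq x hx
      rwa [hL] at this
    obtain ⟨hadj01, hchain1⟩ := List.isChain_cons_cons.mp hchain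
    obtain ⟨hadj12, hchain2⟩ := List.isChain_cons_cons.mp hchain1
    have hy₁Y : y₁ ∈ Y := sideY hadj01 hx₀
    have hx₁X : x₁ ∈ X := sideX hadj12 hy₁Y
    have hx₁x₀ : x₁ ≠ x₀ := by
      intro h
      have h1 := hnodup
      rw [List.nodup_cons] at h1
      exact h1.1 (by rw [← h]; simp)
    by_contra hno
    have hPropAll : ∀ u, G.Adj x₀ u → u ≠ y₁ →
        u ∉ (x₀ :: y₁ :: x₁ :: T) ∧ ∀ v, G.Adj u v → v = x₀ ∨ v = x₁ := by
      intro u hu huy₁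
      rcases construction hbipE hdisj hx₀ hy₀ huniv hnadj hchain hnodup hlast hXL hu huy₁ with
        ⟨c, hc, hcov⟩ | h
      · exact absurd ⟨u, c, hc, hcov⟩ hno
      · exact h
    by_cases hy' : ∃ u, G.Adj x₀ u ∧ u ≠ y₁
    · obtain ⟨y', hy'adj, hy'ne⟩ := hy'
      obtain ⟨hy'L, hy'prop⟩ := hPropAll y' hy'adj hy'ne
      have hy'Y : y' ∈ Y := sideY hy'adj hx₀
      have hy'x₁ : G.Adj y' x₁ := by
        by_contra hcon
        have hsub : X ∩ G.neighborSet y' ⊆ {x₀} := by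
          rintro v ⟨hvX, hvN⟩
          rcases hy'prop v hvN with rfl | rfl
          · rfl
          · exact absurd hvN hcon
        have h1 := Set.ncard_le_ncard hsub (Set.toFinite _)
        rw [Set.ncard_singleton] at h1
        have h2 := hY2 y' hy'Y
        omega
      have hchainStar : List.Chain' G.Adj (x₀ :: y' :: x₁ :: T) := by
        unfold List.Chain'
        rw [List.isChain_cons_cons, List.isChain_cons_cons]
        exact ⟨hy'adj, hy'x₁, hchain2⟩
      have hnodupStar : (x₀ :: y' :: x₁ :: T).Nodup := by
        rw [List.nodup_cons] at hnodup ⊢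
        obtain ⟨hx₀nin, hrest⟩ := hnodup
        rw [List.nodup_cons] at hrest ⊢
        obtain ⟨hy₁nin, hrest2⟩ := hrest
        refine ⟨?_, ?_, hrest2⟩
        · intro h
          rcases List.mem_cons.mp h with h | h
          · exact hne_xy hx₀ hy'Y h
          · exact hx₀nin (List.mem_cons_of_mem _ h)
        · intro h
          exact hy'L (by simp [h])
      have hlastStar : (x₀ :: y' :: x₁ :: T).getLast? = some y₀ := by
        rw [List.getLast?_cons_cons, List.getLast?_cons_cons]
        rw [List.getLast?_cons_cons, List.getLast?_cons_cons] at hlast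
        exact hlast
      have hXLStar : ∀ x ∈ X, x ∈ x₀ :: y' :: x₁ :: T := by
        intro x hx
        have := hXL x hx
        rcases List.mem_cons.mp this with h | h
        · exact h ▸ List.mem_cons_self
        · rcases List.mem_cons.mp h with h2 | h2
          · exact absurd h2 (hne_xy hx hy₁Y)
          · simp [List.mem_cons.mpr (Or.inr (List.mem_cons.mpr (Or.inr h2)))]
      rcases construction hbipE hdisj hx₀ hy₀ huniv hnadj hchainStar hnodupStar hlastStar
          hXLStar hadj01 (Ne.symm hy'ne) with ⟨c, hc, hcov⟩ | ⟨-, hy₁prop⟩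
      · exact absurd ⟨y₁, c, hc, hcov⟩ hno
      · obtain ⟨x₂, hx₂X, hx₂x₀, hx₂x₁⟩ : ∃ x₂, x₂ ∈ X ∧ x₂ ≠ x₀ ∧ x₂ ≠ x₁ := by
          by_contra hcon
          push_neg at hcon
          have hsub : X ⊆ {x₀, x₁} := by
            intro x hx
            simp only [Set.mem_insert_iff, Set.mem_singleton_iff]
            by_cases h1 : x = x₀
            · exact Or.inl h1
            · exact Or.inr (hcon x hx h1)
          have h1 := Set.ncard_le_ncard hsub (Set.toFinite _)
          have h2 : ({x₀, x₁} : Set V).ncard ≤ 2 := by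
            have h3 := Set.ncard_insert_le x₀ ({x₁} : Set V)
            rw [Set.ncard_singleton] at h3
            omega
          omega
        refine not_connected_of_closed (z := x₁) (K := insert x₀ {v | G.Adj x₀ v})
          (x := x₀) (t := x₂) (Set.mem_insert _ _) ?_ hx₂x₁ (Ne.symm hx₁x₀) ?_ (h2conn x₁)
        · intro h
          rcases h with h | h
          · exact hx₂x₀ h
          · exact hne_xy hx₂X (sideY h hx₀) rfl
        · intro u hu v hadj hvx₁
          rcases hu with rfl | hu
          · exact Set.mem_insert_iff.mpr (Or.inr hadj)
          · have hux₀ : G.Adj x₀ u := hu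
            by_cases huy₁ : u = y₁
            · subst huy₁
              rcases hy₁prop v hadj with rfl | rfl
              · exact Set.mem_insert _ _
              · exact absurd rfl hvx₁
            · rcases (hPropAll u hux₀ huy₁).2 v hadj with rfl | rfl
              · exact Set.mem_insert _ _
              · exact absurd rfl hvx₁
    · push_neg at hy'
      refine not_connected_of_closed (z := y₁) (K := {x₀}) (x := x₀) (t := x₁) rfl ?_
        (hne_xy hx₁X hy₁Y) (hne_xy hx₀ hy₁Y) ?_ (h2conn y₁)
      · exact fun h => hx₁x₀ h
      · intro u hu v hadj hvy₁
        rw [Set.mem_singleton_iff] at hu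
        subst hu
        exact absurd (hy' v hadj) hvy₁

end Aux

theorem stmt_8 {V : Type*} [Fintype V] (G : SimpleGraph V) (X Y : Set V)
    (hbip : IsBipartition G X Y) (hcrit : Critical G X Y) (hsat : Saturated G X Y) :
    ∀ y ∈ Y, (G.neighborSet y).ncard ≠ X.ncard - 1 := by
  rintro y₀ hy₀ hdeg
  obtain ⟨hXYuniv, hdisj, hbipE⟩ := hbip
  obtain ⟨hstar, hnsc, hNY, hcrit4⟩ := hcrit
  classical
  have sideX : ∀ {u v : V}, G.Adj u v → u ∈ Y → v ∈ X := by
    intro u v h hu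
    rcases hbipE h with ⟨huX, -⟩ | ⟨-, hv⟩
    · exact absurd hu (Set.disjoint_left.mp hdisj huX)
    · exact hv
  have hNsub : G.neighborSet y₀ ⊆ X := fun v hv => sideX hv hy₀
  have hy₀N : y₀ ∈ superNbhd G Y X := by rw [hNY]; exact hy₀
  have h2 : 2 ≤ (X ∩ G.neighborSet y₀).ncard := hy₀N.2
  rw [Set.inter_eq_right.mpr hNsub] at h2
  have hX3 : 3 ≤ X.ncard := by omega
  have hnotsub : ¬ X ⊆ G.neighborSet y₀ := by
    intro h
    have := Set.ncard_le_ncard h (Set.toFinite _)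
    omega
  obtain ⟨x₀, hx₀X, hx₀N⟩ := Set.not_subset.mp hnotsub
  have hnadj : ¬ G.Adj x₀ y₀ := fun h => hx₀N (h.symm : G.Adj y₀ x₀)
  have huniv : ∀ x ∈ X, x ≠ x₀ → G.Adj y₀ x := by
    intro x hx hne
    by_contra hna
    have hx₀x : x₀ ≠ x := Ne.symm hne
    have hsub : ({x₀, x} : Set V) ⊆ X \ G.neighborSet y₀ := by
      rintro v hv
      rcases hv with rfl | hv
      · exact ⟨hx₀X, hx₀N⟩
      · rw [Set.mem_singleton_iff] at hv
        subst hv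
        exact ⟨hx, hna⟩
    have h2' := Set.ncard_le_ncard hsub (Set.toFinite _)
    rw [Set.ncard_pair hx₀x] at h2'
    have hdiff : (X \ G.neighborSet y₀).ncard = X.ncard - (G.neighborSet y₀).ncard :=
      Set.ncard_diff hNsub (Set.toFinite _)
    omega
  have hY2 : ∀ y ∈ Y, 2 ≤ (X ∩ G.neighborSet y).ncard := by
    intro y hy
    have hmem : y ∈ superNbhd G Y X := by rw [hNY]; exact hy
    exact hmem.2
  have h2conn : ∀ v : V, (G.induce ((Set.univ : Set V) \ {v})).Connected := by
    obtain ⟨-, hconn⟩ := (hstar X subset_rfl hX3).2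
    intro v
    have hv : v ∈ X ∪ superNbhd G Y X := by rw [hNY, hXYuniv]; trivial
    have hres := hconn v hv
    rwa [hNY, hXYuniv] at hres
  apply hnsc
  intro A hA hA3
  by_cases hAX : A = X
  · subst hAX
    have hsc' := hsat x₀ hx₀X y₀ hy₀ hnadj
    obtain ⟨v, c, hc, -, hcX⟩ := hsc' A subset_rfl hA3
    have hcov : ∀ x ∈ A, x ∈ c.support := by
      intro x hx
      have hmem : x ∈ {u | u ∈ c.support} ∩ A := by rw [hcX]; exact hx
      exact hmem.1
    have key : ∃ (v' : V) (w : G.Walk v' v'), w.IsCycle ∧ ∀ x ∈ A, x ∈ w.support := by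
      by_cases he : s(x₀, y₀) ∈ c.edges
      · have hy₀c : y₀ ∈ c.support := c.snd_mem_support_of_mem_edges he
        have hc₂ : (c.rotate y₀ hy₀c).IsCycle := hc.rotate hy₀c
        have he₂ : s(x₀, y₀) ∈ (c.rotate y₀ hy₀c).edges := (c.rotate_edges y₀ hy₀c).mem_iff.mpr he
        have hcov₂ : ∀ x ∈ A, x ∈ (c.rotate y₀ hy₀c).support := by
          intro x hx
          have h1 : x ∈ c.support := hcov x hx
          have h2 : x ∈ c.support.tail := by
            have h3 : x ∈ v :: c.support.tail := c.support_eq_cons ▸ h1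
            rcases List.mem_cons.mp h3 with rfl | h4
            · refine start_mem_support_tail c ?_
              rw [Walk.isCycle_def] at hc
              exact hc.2.1
            · exact h4
          exact List.mem_of_mem_tail ((c.support_rotate y₀ hy₀c).mem_iff.mpr h2)
        obtain ⟨q, hqp, hqe, hqcov⟩ := extract_path (c.rotate y₀ hy₀c) hc₂ he₂
        have hG : ∀ e ∈ q.edges, e ∈ G.edgeSet := by
          intro e heq
          have h1 := q.edges_subset_edgeSet heq
          rw [edgeSet_sup, edgeSet_fromEdgeSet] at h1
          rcases h1 with h1 | h1
          · exact h1
          · exfalso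
            obtain ⟨h1a, -⟩ := h1
            rw [Set.mem_singleton_iff] at h1a
            exact hqe (h1a ▸ heq)
        have hq'p : (q.transfer G hG).IsPath := hqp.transfer hG
        have hq'cov : ∀ x ∈ A, x ∈ (q.transfer G hG).support := by
          intro x hx
          rw [Walk.support_transfer]
          exact hqcov x (hcov₂ x hx)
        exact main_spanning hbipE hdisj hx₀X hy₀ huniv hnadj hY2 h2conn hX3
          (q.transfer G hG) hq'p hq'cov
      · have hG : ∀ e ∈ c.edges, e ∈ G.edgeSet := by
          intro e heq
          have h1 := c.edges_subset_edgeSet heq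
          rw [edgeSet_sup, edgeSet_fromEdgeSet] at h1
          rcases h1 with h1 | h1
          · exact h1
          · exfalso
            obtain ⟨h1a, -⟩ := h1
            rw [Set.mem_singleton_iff] at h1a
            exact he (h1a ▸ heq)
        refine ⟨v, c.transfer G hG, hc.transfer hG, ?_⟩
        intro x hx
        rw [Walk.support_transfer]
        exact hcov x hx
    obtain ⟨v', w, hw, hwcov⟩ := key
    exact ⟨v', w, hw, Set.subset_univ _,
      Set.ext fun u => ⟨fun h => h.2, fun h => ⟨hwcov u h, h⟩⟩⟩
  · have hss : A ⊂ X := Set.ssubset_iff_subset_ne.mpr ⟨hA, hAX⟩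
    obtain ⟨v, c, hc, hsub, hint⟩ := hcrit4 A hss A subset_rfl hA3
    refine ⟨v, c, hc, Set.subset_univ _, ?_⟩
    apply Set.Subset.antisymm
    · rintro u ⟨hus, huX⟩
      rcases hsub hus with h | h
      · exact h
      · exact absurd h (Set.disjoint_left.mp hdisj huX)
    · intro u hu
      have huA : u ∈ {w' | w' ∈ c.support} ∩ A := by rw [hint]; exact hu
      exact ⟨huA.1, hA hu⟩
end

section
/- If G is a saturated critical Y-minimal bipartite graph with parts X and Y and y_1, y_2 ∈ Y both have degree 2, then N(y_1) ≠ N(y_2). -/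
open SimpleGraph Set

lemma induce_adj' {V : Type*} {G : SimpleGraph V} {s : Set V} {a b : ↥s} :
    (G.induce s).Adj a b ↔ G.Adj a b := by
  simp [SimpleGraph.induce]

lemma reachable_of_eq {V : Type*} {G : SimpleGraph V} {a b : V} (h : a = b) :
    G.Reachable a b := h ▸ Reachable.refl _

lemma induce_connected_erase {V : Type*} {G : SimpleGraph V} {T : Set V} {u w : V}
    (hu : u ∈ T) (hw : w ∈ T) (huw : w ≠ u)
    (hsub : ∀ z ∈ T, G.Adj u z → z = w ∨ G.Adj w z)
    (hconn : (G.induce T).Connected) : (G.induce (T \ {u})).Connected := by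
  classical
  have hw' : w ∈ T \ {u} := ⟨hw, huw⟩
  have hmem : ∀ x : V, x ∈ T → (if x = u then w else x) ∈ T \ {u} := by
    intro x hx
    by_cases h : x = u
    · rw [if_pos h]; exact hw'
    · rw [if_neg h]; exact ⟨hx, h⟩
  have key : ∀ (a b : ↥T), (G.induce T).Walk a b →
      (G.induce (T \ {u})).Reachable ⟨_, hmem a a.2⟩ ⟨_, hmem b b.2⟩ := by
    intro a b p
    induction p with
    | nil => exact Reachable.refl _
    | @cons a c b hac p ih =>
      refine Reachable.trans ?_ ih
      have hac' : G.Adj (a : V) (c : V) := induce_adj'.mp hac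
      by_cases ha : (a : V) = u
      · by_cases hc : (c : V) = u
        · exact absurd hac' (by rw [ha, hc]; exact G.irrefl)
        · rcases hsub c c.2 (ha ▸ hac') with h | h
          · exact reachable_of_eq (Subtype.ext (by simp [ha, hc, h]))
          · exact Adj.reachable (induce_adj'.mpr (by simpa [ha, hc] using h))
      · by_cases hc : (c : V) = u
        · rcases hsub a a.2 (hc ▸ hac'.symm) with h | h
          · exact reachable_of_eq (Subtype.ext (by simp [ha, hc, h]))
          · exact Adj.reachable (induce_adj'.mpr (by simpa [ha, hc] using h.symm))
        · exact Adj.reachable (induce_adj'.mpr (by simpa [ha, hc] using hac'))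
  haveI : Nonempty ↥(T \ {u}) := ⟨⟨w, hw'⟩⟩
  refine Connected.mk ?_
  rintro ⟨a, ha, hau⟩ ⟨b, hb, hbu⟩
  have ha' : a ≠ u := by simpa using hau
  have hb' : b ≠ u := by simpa using hbu
  have h2 := key ⟨a, ha⟩ ⟨b, hb⟩ (hconn.preconnected ⟨a, ha⟩ ⟨b, hb⟩).some
  simpa [ha', hb'] using h2

lemma reachable_induce_mono {V : Type*} {G : SimpleGraph V} {s t : Set V} (hst : s ⊆ t)
    {a b : V} (ha : a ∈ s) (hb : b ∈ s) (h : (G.induce s).Reachable ⟨a, ha⟩ ⟨b, hb⟩) :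
    (G.induce t).Reachable ⟨a, hst ha⟩ ⟨b, hst hb⟩ :=
  h.map (induceHomOfLE G hst).toHom


theorem stmt_11 {V : Type*} [Fintype V] (G : SimpleGraph V) (X Y : Set V)
    (hbip : IsBipartition G X Y) (hcrit : Critical G X Y) (hsat : Saturated G X Y)
    (hmin : YMinimal G X Y) (y₁ y₂ : V) (hy₁ : y₁ ∈ Y) (hy₂ : y₂ ∈ Y) (hne : y₁ ≠ y₂)
    (hd₁ : (G.neighborSet y₁).ncard = 2) (hd₂ : (G.neighborSet y₂).ncard = 2) :
    G.neighborSet y₁ ≠ G.neighborSet y₂ := by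
    classical
  intro hNN
  obtain ⟨hXY, hdisj, hadj⟩ := hbip
  obtain ⟨hstar, hnsc, hNX, -⟩ := hcrit
  obtain ⟨x₁, x₂, hx12, hN2⟩ := Set.ncard_eq_two.mp hd₂
  have hN1 : G.neighborSet y₁ = {x₁, x₂} := by rw [hNN, hN2]
  have hadj21 : G.Adj y₂ x₁ := by
    have : x₁ ∈ G.neighborSet y₂ := by rw [hN2]; exact Or.inl rfl
    exact this
  have hadj22 : G.Adj y₂ x₂ := by
    have : x₂ ∈ G.neighborSet y₂ := by rw [hN2]; exact Or.inr rfl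
    exact this
  have hXadj : ∀ {y z}, y ∈ Y → G.Adj y z → z ∈ X := by
    intro y z hy h
    rcases hadj h with ⟨h1, -⟩ | ⟨-, h2⟩
    · exact absurd hy (Set.disjoint_left.mp hdisj h1)
    · exact h2
  have hx1X : x₁ ∈ X := hXadj hy₂ hadj21
  have hx2X : x₂ ∈ X := hXadj hy₂ hadj22
  have hne_XY : ∀ {a b}, a ∈ X → b ∈ Y → a ≠ b :=
    fun ha hb e => (Set.disjoint_left.mp hdisj ha) (e ▸ hb)
  have hnoXX : ∀ {a b}, a ∈ X → b ∈ X → ¬ G.Adj a b := by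
    intro a b ha hb h
    rcases hadj h with ⟨-, h2⟩ | ⟨h1, -⟩
    · exact (Set.disjoint_left.mp hdisj hb) h2
    · exact (Set.disjoint_left.mp hdisj ha) h1
  -- membership of the twins in super-neighborhoods
  have htwin : ∀ {A : Set V}, x₁ ∈ A → x₂ ∈ A → ∀ {y}, y ∈ Y →
      G.neighborSet y = {x₁, x₂} → y ∈ superNbhd G Y A := by
    intro A h1 h2 y hy hNy
    refine ⟨hy, ?_⟩
    rw [hNy]
    have hint : A ∩ {x₁, x₂} = {x₁, x₂} := by
      apply Set.inter_eq_right.mpr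
      intro z hz
      rcases hz with rfl | hz
      · exact h1
      · rw [Set.mem_singleton_iff] at hz; exact hz ▸ h2
    rw [hint, Set.ncard_pair hx12]
  have hnottwin : ∀ {A : Set V}, x₁ ∉ A → ∀ {y}, G.neighborSet y = {x₁, x₂} →
      y ∉ superNbhd G Y A := by
    intro A h1 y hNy hmem
    have h2 := hmem.2
    rw [hNy] at h2
    have hsub : A ∩ {x₁, x₂} ⊆ {x₂} := by
      intro z hz
      rcases hz.2 with rfl | hz2
      · exact absurd hz.1 h1
      · exact hz2
    have hle := Set.ncard_le_ncard hsub (Set.toFinite _)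
    rw [Set.ncard_singleton] at hle
    omega
  -- the strict counting bound
  have hstrict : ∀ A ⊆ X, 3 ≤ A.ncard → x₁ ∈ A → x₂ ∈ A →
      A.ncard + 1 ≤ (superNbhd G Y A).ncard := by
    intro A hAX h3 h1A h2A
    set NA := superNbhd G Y A with hNAdef
    have hy1NA : y₁ ∈ NA := htwin h1A h2A hy₁ hN1
    have hy2NA : y₂ ∈ NA := htwin h1A h2A hy₂ hN2
    have hpairsub : ({y₁, y₂} : Set V) ⊆ NA := by
      intro z hz
      rcases hz with rfl | hz
      · exact hy1NA
      · rw [Set.mem_singleton_iff] at hz; exact hz ▸ hy2NA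
    have hcard2 : NA.ncard = (NA \ {y₁, y₂}).ncard + 2 := by
      rw [Set.ncard_diff hpairsub (Set.toFinite _), Set.ncard_pair hne]
      have hle := Set.ncard_le_ncard hpairsub (Set.toFinite _)
      rw [Set.ncard_pair hne] at hle
      omega
    by_cases h4 : 4 ≤ A.ncard
    · have h1A' : (A \ {x₁}).ncard = A.ncard - 1 :=
        Set.ncard_diff_singleton_of_mem h1A
      have h3' : 3 ≤ (A \ {x₁}).ncard := by omega
      have hsubX : A \ {x₁} ⊆ X := fun z hz => hAX hz.1
      have hcnt := (hstar _ hsubX h3').1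
      have hsub2 : superNbhd G Y (A \ {x₁}) ⊆ NA \ {y₁, y₂} := by
        intro y hy
        refine ⟨⟨hy.1, le_trans hy.2 (Set.ncard_le_ncard
          (Set.inter_subset_inter_left _ Set.diff_subset) (Set.toFinite _))⟩, ?_⟩
        intro hmem
        have hx1n : x₁ ∉ A \ {x₁} := by simp
        rcases hmem with rfl | hmem
        · exact hnottwin hx1n hN1 hy
        · rw [Set.mem_singleton_iff] at hmem; exact hnottwin hx1n hN2 (hmem ▸ hy)
      have hle2 := Set.ncard_le_ncard hsub2 (Set.toFinite _)
      omega
    · by_contra hlt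
      push_neg at hlt
      have hge : A.ncard ≤ NA.ncard := (hstar A hAX h3).1
      have hNA1 : (NA \ {y₁, y₂}).ncard = 1 := by omega
      obtain ⟨y₃, hy₃⟩ := Set.ncard_eq_one.mp hNA1
      have hy₃NA : y₃ ∈ NA := by
        have h' : y₃ ∈ NA \ {y₁, y₂} := by rw [hy₃]; rfl
        exact h'.1
      have hpairA : ({x₁, x₂} : Set V) ⊆ A := by
        intro z hz
        rcases hz with rfl | hz
        · exact h1A
        · rw [Set.mem_singleton_iff] at hz; exact hz ▸ h2A
      have hA5 : 1 ≤ (A \ {x₁, x₂}).ncard := by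
        rw [Set.ncard_diff hpairA (Set.toFinite _), Set.ncard_pair hx12]; omega
      obtain ⟨x₅, hx₅⟩ := Set.nonempty_of_ncard_ne_zero (by omega : (A \ ({x₁, x₂} : Set V)).ncard ≠ 0)
      have hx₅A : x₅ ∈ A := hx₅.1
      have hx₅n : x₅ ∉ ({x₁, x₂} : Set V) := hx₅.2
      obtain ⟨-, h2c⟩ := (hstar A hAX h3).2
      have hconn := h2c y₃ (Or.inr hy₃NA)
      have hYy₃ : y₃ ∈ Y := hy₃NA.1
      have hx₅S : x₅ ∈ (A ∪ NA) \ {y₃} := ⟨Or.inl hx₅A, hne_XY (hAX hx₅A) hYy₃⟩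
      have hx₁S : x₁ ∈ (A ∪ NA) \ {y₃} := ⟨Or.inl h1A, hne_XY hx1X hYy₃⟩
      have hx₅x₁ : x₅ ≠ x₁ := fun h => hx₅n (by rw [h]; exact Or.inl rfl)
      obtain ⟨p⟩ := hconn.preconnected ⟨x₅, hx₅S⟩ ⟨x₁, hx₁S⟩
      cases p with
      | nil => exact hx₅x₁ rfl
      | cons hadj' p' =>
        rename_i c
        have hGadj : G.Adj x₅ (c : V) := induce_adj'.mp hadj'
        have hcS := c.2
        rcases hcS.1 with hcA | hcNA
        · exact hnoXX (hAX hx₅A) (hAX hcA) hGadj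
        · by_cases hc12 : (c : V) = y₁ ∨ (c : V) = y₂
          · rcases hc12 with hc1 | hc2
            · have : x₅ ∈ G.neighborSet y₁ := (hc1 ▸ hGadj).symm
              rw [hN1] at this; exact hx₅n this
            · have : x₅ ∈ G.neighborSet y₂ := (hc2 ▸ hGadj).symm
              rw [hN2] at this; exact hx₅n this
          · push_neg at hc12
            have : (c : V) ∈ NA \ {y₁, y₂} := by
              refine ⟨hcNA, ?_⟩
              rintro (h | h)
              · exact hc12.1 h
              · rw [Set.mem_singleton_iff] at h; exact hc12.2 h
            rw [hy₃] at this
            exact hcS.2 this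
  -- the subgraph H: G with y₂ isolated
  let H : SimpleGraph V :=
    { Adj := fun u v => G.Adj u v ∧ u ≠ y₂ ∧ v ≠ y₂
      symm := by constructor; rintro u v ⟨h1, h2, h3⟩; exact ⟨h1.symm, h3, h2⟩
      loopless := by constructor; rintro v ⟨h1, -, -⟩; exact G.irrefl h1 }
  have hHadj : ∀ {u v}, H.Adj u v ↔ G.Adj u v ∧ u ≠ y₂ ∧ v ≠ y₂ := Iff.rfl
  have hHG : H ≤ G := by intro u v h; exact h.1
  have hHne : H ≠ G := by
    intro h
    have h2 : H.Adj y₂ x₁ := by rw [h]; exact hadj21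
    exact h2.2.1 rfl
  -- super-neighborhoods in H
  have hHN : ∀ {y : V}, y ≠ y₂ → ∀ {A : Set V}, A ⊆ X →
      A ∩ H.neighborSet y = A ∩ G.neighborSet y := by
    intro y hy A hAX
    ext z
    simp only [Set.mem_inter_iff, SimpleGraph.mem_neighborSet]
    constructor
    · rintro ⟨hz, h, -, -⟩; exact ⟨hz, h⟩
    · rintro ⟨hz, h⟩
      exact ⟨hz, h, hy, hne_XY (hAX hz) hy₂⟩
  have hsup : ∀ {A : Set V}, A ⊆ X → superNbhd H Y A = superNbhd G Y A \ {y₂} := by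
    intro A hAX
    ext y
    by_cases hy : y = y₂
    · rw [hy]
      simp only [superNbhd, Set.mem_setOf_eq, Set.mem_diff, Set.mem_singleton_iff]
      constructor
      · rintro ⟨-, h2⟩
        exfalso
        have hemp : A ∩ H.neighborSet y₂ = ∅ := by
          ext z
          simp only [Set.mem_inter_iff, SimpleGraph.mem_neighborSet, Set.mem_empty_iff_false,
            iff_false]
          rintro ⟨-, -, h, -⟩; exact h rfl
        rw [hemp] at h2
        simp at h2
      · rintro ⟨-, h⟩; exact absurd trivial h
    · simp only [superNbhd, Set.mem_setOf_eq, Set.mem_diff, Set.mem_singleton_iff]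
      rw [hHN hy hAX]
      tauto
  -- induced subgraphs agree away from y₂
  have hind : ∀ T : Set V, y₂ ∉ T → H.induce T = G.induce T := by
    intro T hT
    ext a b
    constructor
    · intro h; exact induce_adj'.mpr (induce_adj'.mp h).1
    · intro h
      exact induce_adj'.mpr ⟨induce_adj'.mp h, fun e => hT (e ▸ a.2), fun e => hT (e ▸ b.2)⟩
  -- StarCond for H
  have hSC : StarCond H X Y := by
    intro A hAX h3
    rw [hsup hAX]
    set NA := superNbhd G Y A with hNAdef
    have hy2A : y₂ ∉ A := fun h => (Set.disjoint_left.mp hdisj (hAX h)) hy₂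
    obtain ⟨hcnt, h3S, h2c⟩ : A.ncard ≤ NA.ncard ∧ 3 ≤ (A ∪ NA).ncard ∧
        ∀ v ∈ A ∪ NA, (G.induce ((A ∪ NA) \ {v})).Connected := hstar A hAX h3
    by_cases hy2NA : y₂ ∈ NA
    case neg =>
      rw [Set.diff_singleton_eq_self hy2NA]
      refine ⟨hcnt, h3S, ?_⟩
      intro v hv
      rw [hind]
      · exact h2c v hv
      · rintro ⟨h | h, -⟩
        · exact hy2A h
        · exact hy2NA h
    case pos =>
      -- x₁, x₂ ∈ A
      have h2le : 2 ≤ (A ∩ ({x₁, x₂} : Set V)).ncard := by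
        have h' := hy2NA.2
        rwa [hN2] at h'
      have hAsub : A ∩ ({x₁, x₂} : Set V) = {x₁, x₂} := by
        apply Set.eq_of_subset_of_ncard_le Set.inter_subset_right ?_ (Set.toFinite _)
        rw [Set.ncard_pair hx12]; exact h2le
      have hx1A : x₁ ∈ A := by
        have h' : x₁ ∈ A ∩ ({x₁, x₂} : Set V) := by rw [hAsub]; exact Or.inl rfl
        exact h'.1
      have hx2A : x₂ ∈ A := by
        have h' : x₂ ∈ A ∩ ({x₁, x₂} : Set V) := by rw [hAsub]; exact Or.inr rfl
        exact h'.1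
      have hy1NA : y₁ ∈ NA := htwin hx1A hx2A hy₁ hN1
      have hstrict' := hstrict A hAX h3 hx1A hx2A
      rw [← hNAdef] at hstrict'
      have hdiffcard : (NA \ {y₂}).ncard = NA.ncard - 1 :=
        Set.ncard_diff_singleton_of_mem hy2NA
      refine ⟨by omega, ?_, ?_⟩
      · exact le_trans h3 (Set.ncard_le_ncard Set.subset_union_left (Set.toFinite _))
      · intro v hv
        have hvy₂ : v ≠ y₂ := by
          rcases hv with h | h
          · exact (hne_XY (hAX h) hy₂)
          · exact h.2
        have hvS : v ∈ A ∪ NA := by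
          rcases hv with h | h
          · exact Or.inl h
          · exact Or.inr h.1
        have hseteq : (A ∪ NA \ {y₂}) \ {v} = ((A ∪ NA) \ {v}) \ {y₂} := by
          ext z
          simp only [Set.mem_diff, Set.mem_union, Set.mem_singleton_iff]
          constructor
          · rintro ⟨h | ⟨h, hz2⟩, hzv⟩
            · exact ⟨⟨Or.inl h, hzv⟩, fun e => (Set.disjoint_left.mp hdisj (hAX h)) (e ▸ hy₂)⟩
            · exact ⟨⟨Or.inr h, hzv⟩, hz2⟩
          · rintro ⟨⟨h | h, hzv⟩, hz2⟩
            · exact ⟨Or.inl h, hzv⟩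
            · exact ⟨Or.inr ⟨h, hz2⟩, hzv⟩
        rw [hind _ (by rintro ⟨h1 | ⟨-, h2⟩, -⟩; exacts [hy2A h1, h2 rfl] : y₂ ∉ (A ∪ NA \ {y₂}) \ {v}), hseteq]
        by_cases hv1 : v = y₁
        · rw [hv1]
          -- remove both y₁ and y₂ : the hard case
          have hx21 : x₂ ∉ ({x₁} : Set V) := by
            simp only [Set.mem_singleton_iff]; exact fun e => hx12 e.symm
          have hx121 : x₁ ∉ ({x₂} : Set V) := by
            simp only [Set.mem_singleton_iff]; exact hx12
          have hy21 : y₂ ∉ ({y₁} : Set V) := by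
            simp only [Set.mem_singleton_iff]; exact fun e => hne e.symm
          have hxny : ∀ {a b : V}, a ∈ X → b ∈ Y → a ∉ ({b} : Set V) := by
            intro a b ha hb e
            rw [Set.mem_singleton_iff] at e
            exact hne_XY ha hb e
          have hynx : ∀ {a b : V}, a ∈ X → b ∈ Y → b ∉ ({a} : Set V) := by
            intro a b ha hb e
            rw [Set.mem_singleton_iff] at e
            exact hne_XY ha hb e.symm
          -- step a : remove x₁, then the leaves y₁ and y₂
          have hW1 : (G.induce ((((A ∪ NA) \ {x₁}) \ {y₁}) \ {y₂})).Connected := by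
            refine induce_connected_erase (T := ((A ∪ NA) \ {x₁}) \ {y₁}) (u := y₂) (w := x₂)
              ⟨⟨Or.inr hy2NA, hynx hx1X hy₂⟩, hy21⟩
              ⟨⟨Or.inl hx2A, hx21⟩, hxny hx2X hy₁⟩
              (hne_XY hx2X hy₂) ?_ ?_
            · intro z hz h
              left
              have hzN : z ∈ G.neighborSet y₂ := h
              rw [hN2] at hzN
              rcases hzN with rfl | hz2
              · exact absurd rfl hz.1.2
              · exact Set.mem_singleton_iff.mp hz2
            · refine induce_connected_erase (T := (A ∪ NA) \ {x₁}) (u := y₁) (w := x₂)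
                ⟨Or.inr hy1NA, hynx hx1X hy₁⟩
                ⟨Or.inl hx2A, hx21⟩
                (hne_XY hx2X hy₁) ?_ ?_
              · intro z hz h
                left
                have hzN : z ∈ G.neighborSet y₁ := h
                rw [hN1] at hzN
                rcases hzN with rfl | hz2
                · exact absurd rfl hz.2
                · exact Set.mem_singleton_iff.mp hz2
              · exact h2c x₁ (Or.inl hx1A)
          -- step b : symmetric, removing x₂
          have hW2 : (G.induce ((((A ∪ NA) \ {x₂}) \ {y₁}) \ {y₂})).Connected := by
            refine induce_connected_erase (T := ((A ∪ NA) \ {x₂}) \ {y₁}) (u := y₂) (w := x₁)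
              ⟨⟨Or.inr hy2NA, hynx hx2X hy₂⟩, hy21⟩
              ⟨⟨Or.inl hx1A, hx121⟩, hxny hx1X hy₁⟩
              (hne_XY hx1X hy₂) ?_ ?_
            · intro z hz h
              left
              have hzN : z ∈ G.neighborSet y₂ := h
              rw [hN2] at hzN
              rcases hzN with rfl | hz2
              · rfl
              · exact absurd hz2 hz.1.2
            · refine induce_connected_erase (T := (A ∪ NA) \ {x₂}) (u := y₁) (w := x₁)
                ⟨Or.inr hy1NA, hynx hx2X hy₁⟩
                ⟨Or.inl hx1A, hx121⟩
                (hne_XY hx1X hy₁) ?_ ?_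
              · intro z hz h
                left
                have hzN : z ∈ G.neighborSet y₁ := h
                rw [hN1] at hzN
                rcases hzN with rfl | hz2
                · rfl
                · exact absurd hz2 hz.2
              · exact h2c x₂ (Or.inl hx2A)
          set U : Set V := ((A ∪ NA) \ {y₁}) \ {y₂} with hUdef
          have he1 : (((A ∪ NA) \ {x₁}) \ {y₁}) \ {y₂} = U \ {x₁} := by
            rw [hUdef]; ext z
            simp only [Set.mem_diff, Set.mem_singleton_iff]
            tauto
          have he2 : (((A ∪ NA) \ {x₂}) \ {y₁}) \ {y₂} = U \ {x₂} := by
            rw [hUdef]; ext z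
            simp only [Set.mem_diff, Set.mem_singleton_iff]
            tauto
          rw [he1] at hW1
          rw [he2] at hW2
          -- a third vertex of A
          have hpairA : ({x₁, x₂} : Set V) ⊆ A := by
            intro z hz
            rcases hz with rfl | hz
            · exact hx1A
            · rw [Set.mem_singleton_iff] at hz; exact hz ▸ hx2A
          have hA5 : 1 ≤ (A \ {x₁, x₂}).ncard := by
            rw [Set.ncard_diff hpairA (Set.toFinite _), Set.ncard_pair hx12]; omega
          obtain ⟨x₅, hx₅⟩ := Set.nonempty_of_ncard_ne_zero
            (by omega : (A \ ({x₁, x₂} : Set V)).ncard ≠ 0)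
          have hx₅U : x₅ ∈ U :=
            ⟨⟨Or.inl hx₅.1, hxny (hAX hx₅.1) hy₁⟩, hxny (hAX hx₅.1) hy₂⟩
          have hx₅1 : x₅ ∉ ({x₁} : Set V) := by
            intro e; rw [Set.mem_singleton_iff] at e
            exact hx₅.2 (by rw [e]; exact Or.inl rfl)
          have hx₅2 : x₅ ∉ ({x₂} : Set V) := by
            intro e; rw [Set.mem_singleton_iff] at e
            exact hx₅.2 (by rw [e]; exact Or.inr rfl)
          haveI : Nonempty ↥U := ⟨⟨x₅, hx₅U⟩⟩
          have hreach : ∀ a : ↥U, (G.induce U).Reachable a ⟨x₅, hx₅U⟩ := by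
            intro a
            by_cases hax : (a : V) = x₁
            · have ha2 : (a : V) ∈ U \ {x₂} := ⟨a.2, by rw [hax]; exact hx121⟩
              have hx₅2' : x₅ ∈ U \ {x₂} := ⟨hx₅U, hx₅2⟩
              have hr := reachable_induce_mono (Set.diff_subset)
                ha2 hx₅2' (hW2.preconnected ⟨(a : V), ha2⟩ ⟨x₅, hx₅2'⟩)
              exact hr
            · have ha1 : (a : V) ∈ U \ {x₁} := ⟨a.2, by
                simp only [Set.mem_singleton_iff]; exact hax⟩
              have hx₅1' : x₅ ∈ U \ {x₁} := ⟨hx₅U, hx₅1⟩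
              have hr := reachable_induce_mono (Set.diff_subset)
                ha1 hx₅1' (hW1.preconnected ⟨(a : V), ha1⟩ ⟨x₅, hx₅1'⟩)
              exact hr
          exact Connected.mk (fun a b => (hreach a).trans (hreach b).symm)
        · refine induce_connected_erase (T := (A ∪ NA) \ {v}) (u := y₂) (w := y₁)
            ⟨Or.inr hy2NA, by simp only [Set.mem_singleton_iff]; exact fun e => hvy₂ e.symm⟩
            ⟨Or.inr hy1NA, by simp only [Set.mem_singleton_iff]; exact fun e => hv1 e.symm⟩
            hne ?_ ?_
          · intro z hz h
            right
            have hzN : z ∈ G.neighborSet y₁ := by rw [hN1, ← hN2]; exact h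
            exact hzN
          · exact h2c v hvS
  -- apply Y-minimality and lift cycles back to G
  have hbipH : ∀ ⦃u v⦄, H.Adj u v → (u ∈ X ∧ v ∈ Y) ∨ (u ∈ Y ∧ v ∈ X) :=
    fun u v h => hadj h.1
  have hsc := hmin H X Y hHG (subset_refl X) (subset_refl Y) hbipH (fun h => hHne h.1) hSC
  refine hnsc ?_
  intro A hAX h3
  obtain ⟨v, c, hcyc, -, hXA⟩ := hsc A hAX h3
  refine ⟨v, c.mapLe hHG, hcyc.mapLe hHG, Set.subset_univ _, ?_⟩
  have hsupp : {u | u ∈ (c.mapLe hHG).support} = {u | u ∈ c.support} := by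
    ext u
    simp [Walk.mapLe, Walk.support_map]
  rw [hsupp]
  exact hXA
end

section
/- If G is a saturated critical bipartite graph with parts X and Y and |X| = 6, then some vertex of X has degree at least 4. -/
open SimpleGraph Set

set_option linter.unusedSectionVars false

namespace Stmt13Aux

variable {V : Type*} [Fintype V] {G : SimpleGraph V} {X Y : Set V}

lemma mem_Y_of_adj (hbip : IsBipartition G X Y) {x y : V} (hx : x ∈ X) (h : G.Adj x y) :
    y ∈ Y := by
  rcases hbip.2.2 h with ⟨_, hy⟩ | ⟨hx', _⟩
  · exact hy
  · exact absurd hx' (disjoint_left.mp hbip.2.1 hx)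

lemma nbr_sub_Y (hbip : IsBipartition G X Y) {x : V} (hx : x ∈ X) :
    G.neighborSet x ⊆ Y := fun _ h => mem_Y_of_adj hbip hx h

lemma not_connected_of_isolated {S' : Set V} {x z : V} (hx : x ∈ S') (hz : z ∈ S')
    (hne : z ≠ x) (hiso : ∀ w ∈ S', ¬ G.Adj x w) : ¬ (G.induce S').Connected := by
  intro h
  have key : ∀ (b : ↥S') (p : (G.induce S').Walk ⟨x, hx⟩ b), b = ⟨x, hx⟩ := by
    intro b p
    cases p with
    | nil => rfl
    | cons h' _ =>
      exact absurd (by simpa using h' : G.Adj x _) (hiso _ (by exact (Subtype.mem _)))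
  obtain ⟨p⟩ := h.preconnected ⟨x, hx⟩ ⟨z, hz⟩
  exact hne (congrArg Subtype.val (key ⟨z, hz⟩ p))

lemma work (hbip : IsBipartition G X Y) (hstar : StarCond G X Y)
    {x u v : V} (hx : x ∈ X) (hu : u ∈ X) (hv : v ∈ X)
    (hux : u ≠ x) (hvx : v ≠ x) (huv : u ≠ v) :
    2 ≤ ((G.neighborSet x) ∩ {y | G.Adj u y ∨ G.Adj v y}).ncard := by
  set A : Set V := {x, u, v} with hAdef
  have hA : A ⊆ X := by
    intro z hz
    rcases hz with rfl | rfl | rfl <;> assumption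
  have hcard : A.ncard = 3 :=
    Set.ncard_eq_three.mpr ⟨x, u, v, fun h => hux h.symm, fun h => hvx h.symm, huv, rfl⟩
  obtain ⟨-, -, hconn⟩ := hstar A hA (by rw [hcard])
  set NS := superNbhd G Y A with hNSdef
  set W := G.neighborSet x ∩ NS with hWdef
  have hWsub : ∀ w, G.Adj x w → w ∈ A ∪ NS → w ∈ W := by
    intro w hw hmem
    rcases hmem with hmem | hmem
    · exact absurd (hA hmem) (disjoint_right.mp hbip.2.1 (mem_Y_of_adj hbip hx hw))
    · exact ⟨hw, hmem⟩
  have hxA : x ∈ A ∪ NS := Or.inl (by simp [hAdef])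
  have huA : u ∈ A ∪ NS := Or.inl (by simp [hAdef])
  have hvA : v ∈ A ∪ NS := Or.inl (by simp [hAdef])
  have hW2 : 2 ≤ W.ncard := by
    by_contra hlt
    push_neg at hlt
    rcases W.eq_empty_or_nonempty with hWe | ⟨y0, hy0⟩
    · refine not_connected_of_isolated (x := x) (z := v)
        (S' := (A ∪ NS) \ {u}) ⟨hxA, by simpa using hux.symm⟩
        ⟨hvA, by simpa using huv.symm⟩ hvx ?_ (hconn u huA)
      intro w hw hadj
      have : w ∈ W := hWsub w hadj hw.1
      simp [hWe] at this
    · have hy0W := hy0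
      have hWsing : ∀ z ∈ W, z = y0 := by
        intro z hz
        by_contra hne
        have : 1 < W.ncard := (Set.one_lt_ncard_iff (Set.toFinite W)).mpr ⟨z, y0, hz, hy0, hne⟩
        omega
      have hy0Y : y0 ∈ Y := mem_Y_of_adj hbip hx hy0.1
      have hxy0 : x ≠ y0 := fun h => disjoint_left.mp hbip.2.1 hx (h ▸ hy0Y)
      have huy0 : u ≠ y0 := fun h => disjoint_left.mp hbip.2.1 hu (h ▸ hy0Y)
      refine not_connected_of_isolated (x := x) (z := u)
        (S' := (A ∪ NS) \ {y0}) ⟨hxA, by simpa using hxy0⟩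
        ⟨huA, by simpa using huy0⟩ hux ?_ (hconn y0 (Or.inr hy0.2))
      intro w hw hadj
      exact hw.2 (by simpa using hWsing w (hWsub w hadj hw.1))
  refine le_trans hW2 (Set.ncard_le_ncard ?_ (Set.toFinite _))
  rintro y ⟨hyN, hyNS⟩
  refine ⟨hyN, ?_⟩
  by_contra hno
  simp only [Set.mem_setOf_eq, not_or] at hno
  have hsub : A ∩ G.neighborSet y ⊆ {x} := by
    rintro z ⟨hzA, hzN⟩
    rcases hzA with rfl | rfl | rfl
    · rfl
    · exact absurd hzN.symm hno.1
    · exact absurd hzN.symm hno.2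
  have := Set.ncard_le_ncard hsub (Set.toFinite _)
  simp only [Set.ncard_singleton] at this
  have h2 := hyNS.2
  omega


lemma nbr_sub_X (hbip : IsBipartition G X Y) {y : V} (hy : y ∈ Y) :
    G.neighborSet y ⊆ X := by
  intro w h
  rcases hbip.2.2 h with ⟨hy', _⟩ | ⟨_, hw⟩
  · exact absurd hy' (disjoint_right.mp hbip.2.1 hy)
  · exact hw

lemma hB (hbip : IsBipartition G X Y) (hX : X.ncard = 6) {x y : V} (hx : x ∈ X)
    (hy : y ∈ Y) (hxy : G.Adj x y) :
    ((X \ {x}) \ G.neighborSet y).ncard + (G.neighborSet y).ncard = 6 := by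
  have hNX : G.neighborSet y ⊆ X := nbr_sub_X hbip hy
  have h5 : (X \ {x}).ncard + 1 = 6 := by
    rw [Set.ncard_diff_singleton_add_one hx, hX]
  have hsplit : ((X \ {x}) ∩ G.neighborSet y).ncard + ((X \ {x}) \ G.neighborSet y).ncard
      = (X \ {x}).ncard := Set.ncard_inter_add_ncard_diff_eq_ncard _ _
  have hint : (X \ {x}) ∩ G.neighborSet y = G.neighborSet y \ {x} := by
    ext z
    constructor
    · rintro ⟨⟨_, hzx⟩, hzN⟩; exact ⟨hzN, hzx⟩
    · rintro ⟨hzN, hzx⟩; exact ⟨⟨hNX hzN, hzx⟩, hzN⟩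
  have hdd : (G.neighborSet y \ {x}).ncard + 1 = (G.neighborSet y).ncard :=
    Set.ncard_diff_singleton_add_one (by exact hxy.symm)
  rw [hint] at hsplit
  omega

lemma no2 (hbip : IsBipartition G X Y) (hstar : StarCond G X Y)
    {x y y' : V} (hx : x ∈ X) (hDx : (G.neighborSet x).ncard ≤ 3)
    (hy : y ∈ G.neighborSet x) (hy' : y' ∈ G.neighborSet x) (hne : y ≠ y') :
    (((X \ {x}) \ G.neighborSet y) ∩ ((X \ {x}) \ G.neighborSet y')).ncard ≤ 1 := by
  by_contra hlt
  push_neg at hlt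
  obtain ⟨u, v, hu, hv, huv⟩ := (Set.one_lt_ncard_iff (Set.toFinite _)).mp hlt
  have hw := work hbip hstar hx hu.1.1.1 hv.1.1.1
      (by simpa using hu.1.1.2) (by simpa using hv.1.1.2) huv
  have hsub : G.neighborSet x ∩ {z | G.Adj u z ∨ G.Adj v z}
      ⊆ (G.neighborSet x \ {y}) \ {y'} := by
    rintro z ⟨hzN, hz⟩
    refine ⟨⟨hzN, ?_⟩, ?_⟩
    · rintro rfl
      rcases hz with h | h
      · exact hu.1.2 h.symm
      · exact hv.1.2 h.symm
    · rintro rfl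
      rcases hz with h | h
      · exact hu.2.2 h.symm
      · exact hv.2.2 h.symm
  have hcount := Set.ncard_le_ncard hsub (Set.toFinite _)
  have h1 : (G.neighborSet x \ {y}).ncard + 1 = (G.neighborSet x).ncard :=
    Set.ncard_diff_singleton_add_one hy
  have h2 : ((G.neighborSet x \ {y}) \ {y'}).ncard + 1 = (G.neighborSet x \ {y}).ncard :=
    Set.ncard_diff_singleton_add_one ⟨hy', by simpa using hne.symm⟩
  omega

lemma pair_deg (hbip : IsBipartition G X Y) (hstar : StarCond G X Y) (hX : X.ncard = 6)
    {x y y' : V} (hx : x ∈ X) (hDx : (G.neighborSet x).ncard ≤ 3)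
    (hy : y ∈ G.neighborSet x) (hy' : y' ∈ G.neighborSet x) (hne : y ≠ y') :
    6 ≤ (G.neighborSet y).ncard + (G.neighborSet y').ncard := by
  have hyY : y ∈ Y := mem_Y_of_adj hbip hx hy
  have hy'Y : y' ∈ Y := mem_Y_of_adj hbip hx hy'
  have hB1 := hB hbip hX hx hyY hy
  have hB2 := hB hbip hX hx hy'Y hy'
  have hno := no2 hbip hstar hx hDx hy hy' hne
  set B1 := (X \ {x}) \ G.neighborSet y
  set B2 := (X \ {x}) \ G.neighborSet y'
  have hun : (B1 ∪ B2).ncard + (B1 ∩ B2).ncard = B1.ncard + B2.ncard :=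
    Set.ncard_union_add_ncard_inter _ _
  have hbound : (B1 ∪ B2).ncard ≤ (X \ {x}).ncard :=
    Set.ncard_le_ncard (union_subset diff_subset diff_subset) (Set.toFinite _)
  have h5 : (X \ {x}).ncard + 1 = 6 := by
    rw [Set.ncard_diff_singleton_add_one hx, hX]
  omega

lemma deg2_nbr (hbip : IsBipartition G X Y) (hstar : StarCond G X Y) (hX : X.ncard = 6)
    {x y : V} (hx : x ∈ X) (hDx : (G.neighborSet x).ncard = 2)
    (hy : y ∈ G.neighborSet x) :
    5 ≤ (G.neighborSet y).ncard := by
  by_contra hlt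
  push_neg at hlt
  have hyY : y ∈ Y := mem_Y_of_adj hbip hx hy
  have hB1 := hB hbip hX hx hyY hy
  have h2 : 1 < ((X \ {x}) \ G.neighborSet y).ncard := by omega
  obtain ⟨u, v, hu, hv, huv⟩ := (Set.one_lt_ncard_iff (Set.toFinite _)).mp h2
  have hw := work hbip hstar hx hu.1.1 hv.1.1
      (by simpa using hu.1.2) (by simpa using hv.1.2) huv
  have hsub : G.neighborSet x ∩ {z | G.Adj u z ∨ G.Adj v z}
      ⊆ G.neighborSet x \ {y} := by
    rintro z ⟨hzN, hz⟩
    refine ⟨hzN, ?_⟩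
    rintro rfl
    rcases hz with h | h
    · exact hu.2 h.symm
    · exact hv.2 h.symm
  have hcount := Set.ncard_le_ncard hsub (Set.toFinite _)
  have h1 : (G.neighborSet x \ {y}).ncard + 1 = (G.neighborSet x).ncard :=
    Set.ncard_diff_singleton_add_one hy
  omega

lemma exists_big (hbip : IsBipartition G X Y) (hstar : StarCond G X Y) (hX : X.ncard = 6)
    {x : V} (hx : x ∈ X) (hDx : (G.neighborSet x).ncard = 3) :
    ∃ y ∈ G.neighborSet x, 4 ≤ (G.neighborSet y).ncard := by
  by_contra hno
  push_neg at hno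
  obtain ⟨y1, y2, y3, h12, h13, h23, hN⟩ := Set.ncard_eq_three.mp hDx
  have hy1 : y1 ∈ G.neighborSet x := by rw [hN]; simp
  have hy2 : y2 ∈ G.neighborSet x := by rw [hN]; simp
  have hy3 : y3 ∈ G.neighborSet x := by rw [hN]; simp
  have hle : ∀ y ∈ G.neighborSet x, (G.neighborSet y).ncard ≤ 3 := by
    intro y hy
    have := hno y hy
    omega
  have hd1 : (G.neighborSet y1).ncard = 3 := by
    have := pair_deg hbip hstar hX hx (by omega) hy1 hy2 h12
    have a1 := hle y1 hy1; have a2 := hle y2 hy2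
    omega
  have hd2 : (G.neighborSet y2).ncard = 3 := by
    have := pair_deg hbip hstar hX hx (by omega) hy2 hy1 h12.symm
    have a1 := hle y1 hy1; have a2 := hle y2 hy2
    omega
  have hd3 : (G.neighborSet y3).ncard = 3 := by
    have := pair_deg hbip hstar hX hx (by omega) hy3 hy1 h13.symm
    have a1 := hle y1 hy1; have a3 := hle y3 hy3
    omega
  have hB1 : ((X \ {x}) \ G.neighborSet y1).ncard = 3 := by
    have := hB hbip hX hx (mem_Y_of_adj hbip hx hy1) hy1; omega
  have hB2 : ((X \ {x}) \ G.neighborSet y2).ncard = 3 := by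
    have := hB hbip hX hx (mem_Y_of_adj hbip hx hy2) hy2; omega
  have hB3 : ((X \ {x}) \ G.neighborSet y3).ncard = 3 := by
    have := hB hbip hX hx (mem_Y_of_adj hbip hx hy3) hy3; omega
  have hn12 := no2 hbip hstar hx (by omega) hy1 hy2 h12
  have hn13 := no2 hbip hstar hx (by omega) hy1 hy3 h13
  have hn23 := no2 hbip hstar hx (by omega) hy2 hy3 h23
  set B1 := (X \ {x}) \ G.neighborSet y1
  set B2 := (X \ {x}) \ G.neighborSet y2
  set B3 := (X \ {x}) \ G.neighborSet y3
  have hu12 : (B1 ∪ B2).ncard + (B1 ∩ B2).ncard = B1.ncard + B2.ncard :=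
    Set.ncard_union_add_ncard_inter _ _
  have hu123 : ((B1 ∪ B2) ∪ B3).ncard + ((B1 ∪ B2) ∩ B3).ncard
      = (B1 ∪ B2).ncard + B3.ncard := Set.ncard_union_add_ncard_inter _ _
  have hdistrib : (B1 ∪ B2) ∩ B3 = (B1 ∩ B3) ∪ (B2 ∩ B3) := by
    rw [Set.union_inter_distrib_right]
  have hdle : ((B1 ∪ B2) ∩ B3).ncard ≤ (B1 ∩ B3).ncard + (B2 ∩ B3).ncard := by
    rw [hdistrib]; exact Set.ncard_union_le _ _
  have hbound : ((B1 ∪ B2) ∪ B3).ncard ≤ (X \ {x}).ncard :=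
    Set.ncard_le_ncard
      (union_subset (union_subset diff_subset diff_subset) diff_subset) (Set.toFinite _)
  have h5 : (X \ {x}).ncard + 1 = 6 := by
    rw [Set.ncard_diff_singleton_add_one hx, hX]
  omega


open Finset in
lemma DC (G : SimpleGraph V) (S T : Set V) :
    ∑ x ∈ (Set.toFinite S).toFinset, ((G.neighborSet x) ∩ T).ncard
      = ∑ y ∈ (Set.toFinite T).toFinset, ((G.neighborSet y) ∩ S).ncard := by
  classical
  have h1 : ∀ S T : Set V,
      ∑ x ∈ (Set.toFinite S).toFinset, ((G.neighborSet x) ∩ T).ncard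
        = (Finset.univ.filter
            (fun p : V × V => G.Adj p.1 p.2 ∧ p.1 ∈ S ∧ p.2 ∈ T)).card := by
    intro S T
    rw [Finset.card_eq_sum_card_fiberwise
      (f := Prod.fst) (t := (Set.toFinite S).toFinset)
      (fun p hp => by
        simp only [Finset.mem_coe, Finset.mem_filter] at hp
        simpa using hp.2.2.1)]
    refine Finset.sum_congr rfl ?_
    intro x hx
    have hxS : x ∈ S := by simpa using hx
    rw [Set.ncard_eq_toFinset_card _ (Set.toFinite _)]
    refine (Finset.card_bij' (fun p _ => p.2) (fun y _ => (x, y)) ?_ ?_ ?_ ?_).symm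
    · intro p hp
      simp only [Finset.mem_filter, Finset.mem_univ, true_and] at hp
      simp only [Set.Finite.mem_toFinset, Set.mem_inter_iff]
      obtain ⟨⟨hadj, _, hpT⟩, h1⟩ := hp
      subst h1
      exact ⟨hadj, hpT⟩
    · intro y hy
      simp only [Set.Finite.mem_toFinset, Set.mem_inter_iff, SimpleGraph.mem_neighborSet] at hy
      simp only [Finset.mem_filter, Finset.mem_univ, true_and]
      exact ⟨⟨hy.1, hxS, hy.2⟩, trivial⟩
    · intro p hp
      simp only [Finset.mem_filter] at hp
      exact Prod.ext hp.2.symm rfl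
    · intro y hy
      rfl
  rw [h1 S T, h1 T S]
  refine Finset.card_bij' (fun p _ => p.swap) (fun p _ => p.swap) ?_ ?_ ?_ ?_
  · intro p hp
    simp only [Finset.mem_filter, Finset.mem_univ, true_and] at hp ⊢
    exact ⟨hp.1.symm, hp.2.2, hp.2.1⟩
  · intro p hp
    simp only [Finset.mem_filter, Finset.mem_univ, true_and] at hp ⊢
    exact ⟨hp.1.symm, hp.2.2, hp.2.1⟩
  · intro p _; rfl
  · intro p _; rfl

end Stmt13Aux

section Main

variable {V : Type*} [Fintype V] {G : SimpleGraph V} {X Y : Set V}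

open Stmt13Aux Finset

lemma triple_of_mem {s : Set V} {a : V} (h3 : s.ncard = 3) (ha : a ∈ s) :
    ∃ p q, p ≠ q ∧ a ≠ p ∧ a ≠ q ∧ s = {a, p, q} := by
  obtain ⟨b, c, d, hbc, hbd, hcd, rfl⟩ := Set.ncard_eq_three.mp h3
  simp only [Set.mem_insert_iff, Set.mem_singleton_iff] at ha
  rcases ha with rfl | rfl | rfl
  · exact ⟨c, d, hcd, hbc, hbd, rfl⟩
  · exact ⟨b, d, hbd, fun h => hbc h.symm, hcd, by ext z; simp; tauto⟩
  · exact ⟨b, c, hbc, fun h => hbd h.symm, fun h => hcd h.symm, by ext z; simp; tauto⟩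

theorem main_thm (hbip : IsBipartition G X Y)
    (hstar : StarCond G X Y) (hNY : superNbhd G Y X = Y)
    (hX : X.ncard = 6) :
    ∃ x ∈ X, 4 ≤ (G.neighborSet x).ncard := by
  classical
  by_contra hcon
  push_neg at hcon
  -- basic facts
  have hY6 : 6 ≤ Y.ncard := by
    have h := (hstar X subset_rfl (by rw [hX]; norm_num)).1
    rw [hX, hNY] at h
    exact h
  have hYdeg : ∀ y ∈ Y, 2 ≤ (G.neighborSet y).ncard := by
    intro y hy
    have hy' : y ∈ superNbhd G Y X := by rw [hNY]; exact hy
    exact le_trans hy'.2 (Set.ncard_le_ncard Set.inter_subset_right (Set.toFinite _))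
  have hD23 : ∀ x ∈ X, (G.neighborSet x).ncard = 2 ∨ (G.neighborSet x).ncard = 3 := by
    intro x hx
    have hle : (G.neighborSet x).ncard ≤ 3 := by have := hcon x hx; omega
    have h5 : (X \ {x}).ncard + 1 = 6 := by
      rw [Set.ncard_diff_singleton_add_one hx, hX]
    obtain ⟨u, v, hu, hv, huv⟩ := (Set.one_lt_ncard_iff (Set.toFinite _)).mp
      (show 1 < (X \ {x}).ncard by omega)
    have hw := work hbip hstar hx hu.1 hv.1 (by simpa using hu.2) (by simpa using hv.2) huv
    have := le_trans hw (Set.ncard_le_ncard Set.inter_subset_left (Set.toFinite _))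
    omega
  -- Finset versions
  set Xf := (Set.toFinite X).toFinset with hXfdef
  set Yf := (Set.toFinite Y).toFinset with hYfdef
  have hXfcard : Xf.card = 6 := by
    rw [← Set.ncard_eq_toFinset_card X (Set.toFinite X), hX]
  have hYfcard : 6 ≤ Yf.card := by
    rw [← Set.ncard_eq_toFinset_card Y (Set.toFinite Y)]
    exact hY6
  have hDCXY : ∑ x ∈ Xf, (G.neighborSet x).ncard = ∑ y ∈ Yf, (G.neighborSet y).ncard := by
    have h1 : ∑ x ∈ Xf, (G.neighborSet x).ncard = ∑ x ∈ Xf, (G.neighborSet x ∩ Y).ncard :=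
      Finset.sum_congr rfl (fun x hx => by
        rw [Set.inter_eq_self_of_subset_left (nbr_sub_Y hbip (by simpa [hXfdef] using hx))])
    have h2 : ∑ y ∈ Yf, (G.neighborSet y ∩ X).ncard = ∑ y ∈ Yf, (G.neighborSet y).ncard :=
      Finset.sum_congr rfl (fun y hy => by
        rw [Set.inter_eq_self_of_subset_left (nbr_sub_X hbip (by simpa [hYfdef] using hy))])
    exact h1.trans ((DC G X Y).trans h2)
  -- all X-degrees are 3
  have hall3 : ∀ x ∈ X, (G.neighborSet x).ncard = 3 := by
    by_contra hno
    push_neg at hno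
    obtain ⟨x0, hx0, hx0ne⟩ := hno
    have hD2 : (G.neighborSet x0).ncard = 2 := by rcases hD23 x0 hx0 with h | h; exact h; omega
    obtain ⟨y1, y2, h12, hN⟩ := Set.ncard_eq_two.mp hD2
    have hy1 : y1 ∈ G.neighborSet x0 := by rw [hN]; simp
    have hy2 : y2 ∈ G.neighborSet x0 := by rw [hN]; simp
    have hd1 : 5 ≤ (G.neighborSet y1).ncard := deg2_nbr hbip hstar hX hx0 hD2 hy1
    have hd2 : 5 ≤ (G.neighborSet y2).ncard := deg2_nbr hbip hstar hX hx0 hD2 hy2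
    have hy1Y : y1 ∈ Yf := by simp [hYfdef]; exact mem_Y_of_adj hbip hx0 hy1
    have hy2Y : y2 ∈ Yf := by simp [hYfdef]; exact mem_Y_of_adj hbip hx0 hy2
    have hx0f : x0 ∈ Xf := by simp [hXfdef]; exact hx0
    -- upper bound on X side
    have hSX : ∑ x ∈ Xf, (G.neighborSet x).ncard ≤ 17 := by
      rw [← Finset.add_sum_erase _ _ hx0f]
      have hrest : ∑ x ∈ Xf.erase x0, (G.neighborSet x).ncard ≤ (Xf.erase x0).card * 3 := by
        rw [← smul_eq_mul]
        apply Finset.sum_le_card_nsmul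
        intro x hxm
        have hxX : x ∈ X := by
          have := Finset.mem_of_mem_erase hxm
          simpa [hXfdef] using this
        have := hcon x hxX; omega
      rw [Finset.card_erase_of_mem hx0f, hXfcard] at hrest
      omega
    -- lower bound on Y side
    have hSY : 18 ≤ ∑ y ∈ Yf, (G.neighborSet y).ncard := by
      rw [← Finset.add_sum_erase _ _ hy1Y]
      have hy2e : y2 ∈ Yf.erase y1 := Finset.mem_erase.mpr ⟨h12.symm, hy2Y⟩
      rw [← Finset.add_sum_erase _ _ hy2e]
      have hrest : ((Yf.erase y1).erase y2).card * 2
          ≤ ∑ y ∈ (Yf.erase y1).erase y2, (G.neighborSet y).ncard := by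
        rw [← smul_eq_mul]
        apply Finset.card_nsmul_le_sum
        intro y hym
        refine hYdeg y ?_
        have := Finset.mem_of_mem_erase (Finset.mem_of_mem_erase hym)
        simpa [hYfdef] using this
      rw [Finset.card_erase_of_mem hy2e, Finset.card_erase_of_mem hy1Y] at hrest
      omega
    omega
  have hSX18 : ∑ x ∈ Xf, (G.neighborSet x).ncard = 18 := by
    rw [Finset.sum_congr rfl (fun x hx => hall3 x (by simpa [hXfdef] using hx))]
    simp [hXfcard]
  have hSY18 : ∑ y ∈ Yf, (G.neighborSet y).ncard = 18 := by rw [← hDCXY]; exact hSX18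
  -- partition of Y by degree
  set Y2 : Set V := {y | y ∈ Y ∧ (G.neighborSet y).ncard = 2} with hY2def
  set Y3 : Set V := {y | y ∈ Y ∧ (G.neighborSet y).ncard = 3} with hY3def
  set Y4 : Set V := {y | y ∈ Y ∧ 4 ≤ (G.neighborSet y).ncard} with hY4def
  set Y2f := (Set.toFinite Y2).toFinset with hY2fdef
  set Y3f := (Set.toFinite Y3).toFinset with hY3fdef
  set Y4f := (Set.toFinite Y4).toFinset with hY4fdef
  have hY2fm : ∀ y, y ∈ Y2f ↔ (y ∈ Y ∧ (G.neighborSet y).ncard = 2) := by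
    intro y; simp [hY2fdef, hY2def]
  have hY3fm : ∀ y, y ∈ Y3f ↔ (y ∈ Y ∧ (G.neighborSet y).ncard = 3) := by
    intro y; simp [hY3fdef, hY3def]
  have hY4fm : ∀ y, y ∈ Y4f ↔ (y ∈ Y ∧ 4 ≤ (G.neighborSet y).ncard) := by
    intro y; simp [hY4fdef, hY4def]
  have hYfm : ∀ y, y ∈ Yf ↔ y ∈ Y := by
    intro y; rw [hYfdef]; exact Set.Finite.mem_toFinset _
  have hpart : Yf = (Y2f ∪ Y3f) ∪ Y4f := by
    ext y
    rw [Finset.mem_union, Finset.mem_union, hY2fm, hY3fm, hY4fm, hYfm]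
    constructor
    · intro hy
      have h2 := hYdeg y hy
      by_cases ha : (G.neighborSet y).ncard = 2
      · exact Or.inl (Or.inl ⟨hy, ha⟩)
      by_cases hb : (G.neighborSet y).ncard = 3
      · exact Or.inl (Or.inr ⟨hy, hb⟩)
      · exact Or.inr ⟨hy, by omega⟩
    · rintro ((⟨h, _⟩ | ⟨h, _⟩) | ⟨h, _⟩) <;> exact h
  have hd23 : Disjoint Y2f Y3f := by
    rw [Finset.disjoint_left]
    intro y h1 h2; rw [hY2fm] at h1; rw [hY3fm] at h2; omega
  have hd234 : Disjoint (Y2f ∪ Y3f) Y4f := by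
    rw [Finset.disjoint_left]
    intro y h1 h2
    rw [Finset.mem_union, hY2fm, hY3fm] at h1; rw [hY4fm] at h2
    rcases h1 with h | h <;> omega
  set k := Y2f.card with hkdef
  set t := Y3f.card with htdef
  set m := Y4f.card with hmdef
  set E4 := ∑ y ∈ Y4f, (G.neighborSet y).ncard with hE4def
  have hcardsplit : Yf.card = k + t + m := by
    rw [hpart, Finset.card_union_of_disjoint hd234, Finset.card_union_of_disjoint hd23]
  have hsum2 : ∑ y ∈ Y2f, (G.neighborSet y).ncard = 2 * k := by
    rw [Finset.sum_congr rfl (fun y hy => ((hY2fm y).mp hy).2)]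
    simp [hkdef, mul_comm]
  have hsum3 : ∑ y ∈ Y3f, (G.neighborSet y).ncard = 3 * t := by
    rw [Finset.sum_congr rfl (fun y hy => ((hY3fm y).mp hy).2)]
    simp [htdef, mul_comm]
  have hsumsplit : 2 * k + 3 * t + E4 = 18 := by
    have h := hSY18
    rw [hpart, Finset.sum_union hd234, Finset.sum_union hd23, hsum2, hsum3] at h
    omega
  have hE4m : 4 * m ≤ E4 := by
    rw [mul_comm, ← smul_eq_mul]
    exact Finset.card_nsmul_le_sum _ _ _ (fun y hy => ((hY4fm y).mp hy).2)
  -- pointwise facts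
  have hpoint : ∀ x ∈ X,
      (G.neighborSet x ∩ Y2).ncard ≤ 1 ∧ 1 ≤ (G.neighborSet x ∩ Y4).ncard ∧
      ((G.neighborSet x ∩ Y4).ncard ≤ 1 → (G.neighborSet x ∩ Y2).ncard = 0) ∧
      (G.neighborSet x ∩ Y2).ncard + (G.neighborSet x ∩ Y3).ncard
        + (G.neighborSet x ∩ Y4).ncard = 3 := by
    intro x hx
    have hd3 := hall3 x hx
    have hcover : (G.neighborSet x ∩ Y2) ∪ (G.neighborSet x ∩ Y3) ∪ (G.neighborSet x ∩ Y4)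
        = G.neighborSet x := by
      ext z
      simp only [Set.mem_union, Set.mem_inter_iff, hY2def, hY3def, hY4def, Set.mem_setOf_eq]
      constructor
      · rintro ((⟨h, _⟩ | ⟨h, _⟩) | ⟨h, _⟩) <;> exact h
      · intro hz
        have hzY := nbr_sub_Y hbip hx hz
        have h2 := hYdeg z hzY
        by_cases ha : (G.neighborSet z).ncard = 2
        · exact Or.inl (Or.inl ⟨hz, hzY, ha⟩)
        by_cases hb : (G.neighborSet z).ncard = 3
        · exact Or.inl (Or.inr ⟨hz, hzY, hb⟩)
        · exact Or.inr ⟨hz, hzY, by omega⟩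
    have dis1 : Disjoint (G.neighborSet x ∩ Y2) (G.neighborSet x ∩ Y3) := by
      rw [Set.disjoint_left]
      rintro z ⟨_, _, h2⟩ ⟨_, _, h3⟩; omega
    have dis2 : Disjoint ((G.neighborSet x ∩ Y2) ∪ (G.neighborSet x ∩ Y3))
        (G.neighborSet x ∩ Y4) := by
      rw [Set.disjoint_left]
      rintro z (⟨_, _, h2⟩ | ⟨_, _, h3⟩) ⟨_, _, h4⟩ <;> omega
    have hsplit : (G.neighborSet x ∩ Y2).ncard + (G.neighborSet x ∩ Y3).ncard
        + (G.neighborSet x ∩ Y4).ncard = 3 := by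
      have e1 : ((G.neighborSet x ∩ Y2) ∪ (G.neighborSet x ∩ Y3)
          ∪ (G.neighborSet x ∩ Y4)).ncard = 3 := by rw [hcover, hd3]
      rw [Set.ncard_union_eq dis2 (Set.toFinite _) (Set.toFinite _),
        Set.ncard_union_eq dis1 (Set.toFinite _) (Set.toFinite _)] at e1
      omega
    have hp1 : (G.neighborSet x ∩ Y2).ncard ≤ 1 := by
      by_contra hgt
      push_neg at hgt
      obtain ⟨y, y', hy, hy', hne⟩ := (Set.one_lt_ncard_iff (Set.toFinite _)).mp hgt
      have := pair_deg hbip hstar hX hx (by omega) hy.1 hy'.1 hne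
      have h1 := hy.2.2
      have h2 := hy'.2.2
      omega
    have hr1 : 1 ≤ (G.neighborSet x ∩ Y4).ncard := by
      obtain ⟨y, hyN, hy4⟩ := exists_big hbip hstar hX hx hd3
      exact (Set.ncard_pos (Set.toFinite _)).mpr ⟨y, hyN, nbr_sub_Y hbip hx hyN, hy4⟩
    refine ⟨hp1, hr1, ?_, hsplit⟩
    intro hle1
    by_contra hp0
    obtain ⟨y, hyN, hyY, hy2⟩ := Set.nonempty_of_ncard_ne_zero hp0
    have hsub : G.neighborSet x \ {y} ⊆ G.neighborSet x ∩ Y4 := by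
      rintro z ⟨hzN, hzy⟩
      have hne : y ≠ z := fun h => hzy (by simp [h.symm])
      have := pair_deg hbip hstar hX hx (by omega) hyN hzN hne
      exact ⟨hzN, nbr_sub_Y hbip hx hzN, by omega⟩
    have hcd : (G.neighborSet x \ {y}).ncard + 1 = 3 := by
      rw [Set.ncard_diff_singleton_add_one hyN, hd3]
    have := Set.ncard_le_ncard hsub (Set.toFinite _)
    omega
  -- double counts for the classes
  have hDCclass : ∀ (T : Set V), (∀ y ∈ T, y ∈ Y) →
      ∑ x ∈ Xf, (G.neighborSet x ∩ T).ncard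
        = ∑ y ∈ (Set.toFinite T).toFinset, (G.neighborSet y).ncard := by
    intro T hT
    refine (DC G X T).trans (Finset.sum_congr rfl (fun y hy => ?_))
    rw [Set.inter_eq_self_of_subset_left
      (nbr_sub_X hbip (hT y (by simpa using hy)))]
  have hDC4 : ∑ x ∈ Xf, (G.neighborSet x ∩ Y4).ncard = E4 :=
    hDCclass Y4 (fun y hy => hy.1)
  have hDC3 : ∑ x ∈ Xf, (G.neighborSet x ∩ Y3).ncard = 3 * t :=
    (hDCclass Y3 (fun y hy => hy.1)).trans hsum3
  have hDC2 : ∑ x ∈ Xf, (G.neighborSet x ∩ Y2).ncard = 2 * k :=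
    (hDCclass Y2 (fun y hy => hy.1)).trans hsum2
  have hDineq : 24 ≤ 2 * E4 + 3 * t := by
    have hpt : ∀ x ∈ Xf, 4 ≤ 2 * (G.neighborSet x ∩ Y4).ncard
        + (G.neighborSet x ∩ Y3).ncard := by
      intro x hx
      obtain ⟨h1, h2, h3, h4⟩ := hpoint x (by simpa [hXfdef] using hx)
      by_cases hc : (G.neighborSet x ∩ Y4).ncard ≤ 1
      · have := h3 hc; omega
      · omega
    have hsumpt := Finset.sum_le_sum hpt
    rw [Finset.sum_add_distrib, ← Finset.mul_sum, hDC4, hDC3] at hsumpt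
    simp only [Finset.sum_const, smul_eq_mul, hXfcard] at hsumpt
    omega
  have hk3 : k = 3 := by omega
  have ht0 : t = 0 := by omega
  have hm3 : m = 3 := by omega
  have hE412 : E4 = 12 := by omega
  -- all Y4 degrees are exactly 4
  have hY4deg : ∀ y ∈ Y4f, (G.neighborSet y).ncard = 4 := by
    intro y hy
    have h4 := ((hY4fm y).mp hy).2
    have hsum : ∑ z ∈ Y4f, (G.neighborSet z).ncard = 12 := by
      rw [← hE4def]; exact hE412
    rw [← Finset.add_sum_erase _ _ hy] at hsum
    have hrest : (Y4f.erase y).card * 4 ≤ ∑ z ∈ Y4f.erase y, (G.neighborSet z).ncard := by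
      rw [← smul_eq_mul]
      exact Finset.card_nsmul_le_sum (Y4f.erase y) _ 4
        (fun z hz => ((hY4fm z).mp (Finset.mem_of_mem_erase hz)).2)
    have hce : (Y4f.erase y).card = Y4f.card - 1 := Finset.card_erase_of_mem hy
    have hY4c : Y4f.card = 3 := by rw [← hmdef]; exact hm3
    rw [hce, hY4c] at hrest
    omega
  -- every x has exactly one degree-2 neighbor
  have hone : ∀ x ∈ X, (G.neighborSet x ∩ Y2).ncard = 1 := by
    have hsum6 : ∑ x ∈ Xf, (G.neighborSet x ∩ Y2).ncard = 6 := by rw [hDC2, hk3]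
    intro x hx
    have hxf : x ∈ Xf := by rw [hXfdef]; simpa using hx
    have hle := (hpoint x hx).1
    by_contra hne
    have hzero : (G.neighborSet x ∩ Y2).ncard = 0 := by omega
    rw [← Finset.add_sum_erase _ _ hxf, hzero, zero_add] at hsum6
    have hrest : ∑ x' ∈ Xf.erase x, (G.neighborSet x' ∩ Y2).ncard
        ≤ (Xf.erase x).card * 1 := by
      rw [← smul_eq_mul]
      refine Finset.sum_le_card_nsmul (Xf.erase x) _ 1 ?_
      intro x' hx'
      refine (hpoint x' ?_).1
      have := Finset.mem_of_mem_erase hx'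
      rw [hXfdef] at this
      simpa using this
    rw [Finset.card_erase_of_mem hxf, hXfcard] at hrest
    omega
  have hY3empty : ∀ y ∈ Y, (G.neighborSet y).ncard ≠ 3 := by
    intro y hy hdeg3
    have hmem : y ∈ Y3f := (hY3fm y).mpr ⟨hy, hdeg3⟩
    have hc := Finset.card_ne_zero_of_mem hmem
    have : Y3f.card = 0 := by rw [← htdef]; exact ht0
    omega
  -- pick a degree-2 vertex a and its two neighbors
  have hY2c : Y2f.card = 3 := by rw [← hkdef]; exact hk3
  obtain ⟨a, haf⟩ := Finset.card_pos.mp (by rw [hY2c]; norm_num)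
  have haY : a ∈ Y := ((hY2fm a).mp haf).1
  have haD : (G.neighborSet a).ncard = 2 := ((hY2fm a).mp haf).2
  obtain ⟨x1, x2, hx12, hNa⟩ := Set.ncard_eq_two.mp haD
  have hx1X : x1 ∈ X := nbr_sub_X hbip haY (by rw [hNa]; simp)
  have hx2X : x2 ∈ X := nbr_sub_X hbip haY (by rw [hNa]; simp)
  have key : ∀ z z' : V, z ∈ X → z' ∈ X → G.neighborSet a = {z, z'} → z ≠ z' →
      ∃ p q : V, p ≠ q ∧ a ≠ p ∧ a ≠ q ∧ G.Adj z p ∧ G.Adj z q ∧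
        (4 ≤ (G.neighborSet p).ncard) ∧ (4 ≤ (G.neighborSet q).ncard) ∧
        p ∈ Y ∧ q ∈ Y ∧ ¬ G.Adj z' p ∧ ¬ G.Adj z' q := by
    intro z z' hzX hz'X hNaz hzz'
    have haNz : a ∈ G.neighborSet z := by
      have hz : z ∈ G.neighborSet a := by rw [hNaz]; simp
      exact hz.symm
    have hdz := hall3 z hzX
    obtain ⟨p, q, hpq, hap, haq, hNz⟩ := triple_of_mem hdz haNz
    have hpNz : p ∈ G.neighborSet z := by rw [hNz]; simp
    have hqNz : q ∈ G.neighborSet z := by rw [hNz]; simp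
    have hpY : p ∈ Y := nbr_sub_Y hbip hzX hpNz
    have hqY : q ∈ Y := nbr_sub_Y hbip hzX hqNz
    have hbig : ∀ w, w ∈ G.neighborSet z → a ≠ w → 4 ≤ (G.neighborSet w).ncard := by
      intro w hwNz haw
      have hwY : w ∈ Y := nbr_sub_Y hbip hzX hwNz
      have h2 := hYdeg w hwY
      rcases Nat.lt_or_ge (G.neighborSet w).ncard 4 with h | h
      · have hne3 := hY3empty w hwY
        have hpair := pair_deg hbip hstar hX hzX (by omega) haNz hwNz haw
        omega
      · exact h
    have hdp := hbig p hpNz hap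
    have hdq := hbig q hqNz haq
    have hnadj : ∀ w, w ∈ G.neighborSet z → a ≠ w → 4 ≤ (G.neighborSet w).ncard →
        ¬ G.Adj z' w := by
      intro w hwNz haw hw4 hadj
      have hwY : w ∈ Y := nbr_sub_Y hbip hzX hwNz
      have hw4' : (G.neighborSet w).ncard = 4 := hY4deg w ((hY4fm w).mpr ⟨hwY, hw4⟩)
      have hno := no2 hbip hstar hzX (by omega) haNz hwNz haw
      have hBw := hB hbip hX hzX hwY hwNz
      have hsub : (X \ {z}) \ G.neighborSet w ⊆ (X \ {z}) \ G.neighborSet a := by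
        rintro s ⟨hsX, hsNw⟩
        refine ⟨hsX, ?_⟩
        rw [hNaz]
        simp only [Set.mem_insert_iff, Set.mem_singleton_iff]
        push_neg
        constructor
        · rintro rfl; exact hsX.2 rfl
        · rintro rfl; exact hsNw hadj.symm
      have hint : ((X \ {z}) \ G.neighborSet a) ∩ ((X \ {z}) \ G.neighborSet w)
          = (X \ {z}) \ G.neighborSet w := Set.inter_eq_self_of_subset_right hsub
      rw [hint] at hno
      omega
    exact ⟨p, q, hpq, hap, haq, hpNz, hqNz, hdp, hdq, hpY, hqY,
      hnadj p hpNz hap hdp, hnadj q hqNz haq hdq⟩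
  obtain ⟨p, q, hpq, hap, haq, hzp, hzq, hdp, hdq, hpY, hqY, hn1, hn2⟩ :=
    key x1 x2 hx1X hx2X hNa hx12
  obtain ⟨p2, q2, hpq2, hap2, haq2, hzp2, hzq2, hdp2, hdq2, hpY2, hqY2, hn12, hn22⟩ :=
    key x2 x1 hx2X hx1X (by rw [hNa]; exact Set.pair_comm x1 x2) hx12.symm
  have hne1 : p ≠ p2 := fun h => hn12 (h ▸ hzp)
  have hne2 : p ≠ q2 := fun h => hn22 (h ▸ hzp)
  have hne3 : q ≠ p2 := fun h => hn12 (h ▸ hzq)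
  have hne4 : q ≠ q2 := fun h => hn22 (h ▸ hzq)
  have hsub4 : ({p, q, p2, q2} : Set V) ⊆ Y4 := by
    intro s hs
    rcases hs with rfl | rfl | rfl | rfl
    · exact ⟨hpY, hdp⟩
    · exact ⟨hqY, hdq⟩
    · exact ⟨hpY2, hdp2⟩
    · exact ⟨hqY2, hdq2⟩
  have hc4 : ({p, q, p2, q2} : Set V).ncard = 4 := by
    rw [Set.ncard_insert_of_notMem (by
        simp only [Set.mem_insert_iff, Set.mem_singleton_iff]; push_neg
        exact ⟨hpq, hne1, hne2⟩) (Set.toFinite _),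
      Set.ncard_insert_of_notMem (by
        simp only [Set.mem_insert_iff, Set.mem_singleton_iff]; push_neg
        exact ⟨hne3, hne4⟩) (Set.toFinite _),
      Set.ncard_insert_of_notMem (by
        simp only [Set.mem_singleton_iff]
        exact hpq2) (Set.toFinite _),
      Set.ncard_singleton]
  have hY4n : Y4.ncard = 3 := by
    rw [Set.ncard_eq_toFinset_card Y4 (Set.toFinite Y4), ← hY4fdef, ← hmdef]
    exact hm3
  have hfin := Set.ncard_le_ncard hsub4 (Set.toFinite _)
  rw [hc4, hY4n] at hfin
  omega

end Main


theorem stmt_13 {V : Type*} [Fintype V] (G : SimpleGraph V) (X Y : Set V)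
    (hbip : IsBipartition G X Y) (hcrit : Critical G X Y) (hsat : Saturated G X Y)
    (hX : X.ncard = 6) :
    ∃ x ∈ X, 4 ≤ (G.neighborSet x).ncard := by
  exact main_thm hbip hcrit.1 hcrit.2.2.1 hX
end
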